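/- arXiv:0907.3275 — 4 statements merged into one kernel-verified Lean document; each statement's English description precedes it below -/
import Mathlib

section
/- Let v : ℕ → ℝ be weakly increasing, and for a ∈ ℝ let l_a = #{j ∈ ℕ : v_j = a} ∈ ℕ ∪ {∞}. Let u = u_1⋯u_n be a word all of whose letters lie in the support {v_j : j ∈ ℕ}, let μ_a(u) = #{m ≤ n : u_m = a}, and let inv(u) = #{(i, j) : i < j, u_i > u_j}. Then P^{(v)}(w_1 = u_1, ..., w_n = u_n) = q^{inv(u)} · q^{−Σ_{b<a} μ_b(u) μ_a(u)} · ∏_a [ (q^{l_a}; q^{−1})_{μ_a(u)} · q^{μ_a(u) Σ_{b<a} l_b} ], where a and b run over the support of v, (x; q^{−1})_k = ∏_{i=0}^{k−1} (1 − x q^{−i}), and the conventions q^{∞} = 0 and (0; q^{−1})_k = 1 are used. -/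
open MeasureTheory ProbabilityTheory

/-- The first `j` values `σ(0), …, σ(j-1)` of the infinite `q`-shuffle permutation driven by
the (0-indexed) geometric choices `x`. -/
noncomputable def shufflePrefix (x : ℕ → ℕ) : ℕ → List ℕ
  | 0 => []
  | j + 1 => shufflePrefix x j ++ [Nat.nth (fun m => m ∉ shufflePrefix x j) (x j)]

/-- The random injection `σ : ℕ → ℕ` driving the infinite `q`-shuffle: `σ(j)` is the
`x j`-th smallest (0-indexed) natural number not in `{σ(0), …, σ(j-1)}`. -/
noncomputable def shuffleSeq (x : ℕ → ℕ) (j : ℕ) : ℕ :=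
  Nat.nth (fun m => m ∉ shufflePrefix x j) (x j)

/-- `q ^ k` for an extended-natural exponent `k ∈ ℕ ∪ {∞}`, with the convention `q^∞ = 0`
(valid for `0 < q < 1`). -/
noncomputable def qpowE (q : ℝ) (k : ℕ∞) : ℝ := if k = ⊤ then 0 else q ^ k.toNat


lemma shufflePrefix_succ (x : ℕ → ℕ) (j : ℕ) :
    shufflePrefix x (j+1) = shufflePrefix x j ++ [shuffleSeq x j] := rfl

lemma notMem_infinite (l : List ℕ) : {m : ℕ | m ∉ l}.Infinite := by
  have : {m : ℕ | m ∈ l}.Finite := l.finite_toSet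
  exact this.infinite_compl

lemma shuffleSeq_notMem (x : ℕ → ℕ) (j : ℕ) : shuffleSeq x j ∉ shufflePrefix x j :=
  Nat.nth_mem_of_infinite (notMem_infinite _) (x j)

lemma shufflePrefix_eq_map (x : ℕ → ℕ) (j : ℕ) :
    shufflePrefix x j = (List.range j).map (shuffleSeq x) := by
  induction j with
  | zero => rfl
  | succ j ih => rw [shufflePrefix_succ, ih, List.range_succ, List.map_append]; rfl

lemma mem_shufflePrefix_iff (x : ℕ → ℕ) {j : ℕ} {a : ℕ} :
    a ∈ shufflePrefix x j ↔ ∃ m < j, shuffleSeq x m = a := by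
  simp [shufflePrefix_eq_map, List.mem_map]

lemma shufflePrefix_prefix (x : ℕ → ℕ) {i j : ℕ} (h : i ≤ j) :
    shufflePrefix x i <+: shufflePrefix x j := by
  induction j with
  | zero => simp_all
  | succ j ih =>
    rcases Nat.lt_or_ge i (j+1) with h' | h'
    · exact (ih (by omega)).trans ⟨[shuffleSeq x j], (shufflePrefix_succ x j).symm⟩
    · have : i = j + 1 := by omega
      subst this; exact List.prefix_rfl

lemma shuffleSeq_injOn (x : ℕ → ℕ) {i j : ℕ} (h : i < j) :
    shuffleSeq x i ≠ shuffleSeq x j := by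
  intro he
  have h1 : shuffleSeq x i ∈ shufflePrefix x (i+1) := by
    rw [mem_shufflePrefix_iff]; exact ⟨i, by omega, rfl⟩
  have h2 : shuffleSeq x i ∈ shufflePrefix x j :=
    (shufflePrefix_prefix x (by omega : i+1 ≤ j)).subset h1
  rw [he] at h2
  exact shuffleSeq_notMem x j h2

lemma shufflePrefix_length (x : ℕ → ℕ) (j : ℕ) : (shufflePrefix x j).length = j := by
  simp [shufflePrefix_eq_map]

lemma shufflePrefix_nodup (x : ℕ → ℕ) (j : ℕ) : (shufflePrefix x j).Nodup := by
  rw [shufflePrefix_eq_map]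
  refine List.Nodup.map_on ?_ List.nodup_range
  intro a ha b hb hab
  rcases Nat.lt_trichotomy a b with h | h | h
  · exact absurd hab (shuffleSeq_injOn x h)
  · exact h
  · exact absurd hab.symm (shuffleSeq_injOn x h)

section Counting

lemma dc_eq_Iio {S : Set ℕ} (h : ∀ ⦃i j : ℕ⦄, i ≤ j → j ∈ S → i ∈ S) (hf : S.Finite) :
    S = Set.Iio S.ncard := by
  classical
  by_cases hS : ∀ m, m ∈ S
  · exact absurd (Set.eq_univ_of_forall hS ▸ hf) (Set.infinite_univ (α := ℕ))
  · push_neg at hS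
    have hfind := Nat.find_spec hS
    have hSI : S = Set.Iio (Nat.find hS) := by
      ext i
      constructor
      · intro hi
        by_contra hlt
        exact hfind (h (by simpa using hlt) hi)
      · intro hi
        by_contra hni
        exact absurd hi (by simpa using Nat.find_min' hS hni)
    rw [hSI, ← Finset.coe_Iio, Set.ncard_coe_finset, Nat.card_Iio, Finset.coe_Iio]

lemma dc_eq_univ {S : Set ℕ} (h : ∀ ⦃i j : ℕ⦄, i ≤ j → j ∈ S → i ∈ S) (hf : S.Infinite) :
    S = Set.univ := by
  by_cases hS : ∀ m, m ∈ S
  · exact Set.eq_univ_of_forall hS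
  · push_neg at hS
    obtain ⟨m, hm⟩ := hS
    exfalso
    refine hf (Set.Finite.subset (Set.finite_Iio m) ?_)
    intro i hi
    by_contra hni
    exact hm (h (by simpa using hni) hi)

variable {p : ℕ → Prop} {v : ℕ → ℝ}

lemma preimage_lt_eq (hp : (setOf p).Infinite) (hv : Monotone v) (a : ℝ) (hfin : {j | p j ∧ v j < a}.Finite) :
    {i : ℕ | v (Nat.nth p i) < a} = Set.Iio {j | p j ∧ v j < a}.ncard := by
  have hinj := Nat.nth_injective hp
  have hpre : {i : ℕ | v (Nat.nth p i) < a} = Nat.nth p ⁻¹' {j | p j ∧ v j < a} := by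
    ext i
    simp only [Set.mem_setOf_eq, Set.mem_preimage]
    exact ⟨fun h => ⟨Nat.nth_mem_of_infinite hp i, h⟩, fun h => h.2⟩
  have hdc : ∀ ⦃i j : ℕ⦄, i ≤ j → j ∈ {i : ℕ | v (Nat.nth p i) < a} →
      i ∈ {i : ℕ | v (Nat.nth p i) < a} := by
    intro i j hij hj
    exact lt_of_le_of_lt (hv ((Nat.nth_monotone hp) hij)) hj
  have hSfin : {i : ℕ | v (Nat.nth p i) < a}.Finite := by
    rw [hpre]; exact hfin.preimage hinj.injOn
  have hcard : {i : ℕ | v (Nat.nth p i) < a}.ncard = {j | p j ∧ v j < a}.ncard := by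
    rw [hpre]
    refine le_antisymm (Set.ncard_le_ncard_of_injOn (Nat.nth p) (fun i hi => hi) hinj.injOn hfin)
      ?_
    classical
    refine Set.ncard_le_ncard_of_injOn (fun j => Nat.count p j) ?_ ?_ (hfin.preimage hinj.injOn)
    · intro j hj
      have := Nat.nth_count (p := p) hj.1
      simp only [Set.mem_preimage, Set.mem_setOf_eq, this]
      exact hj
    · intro j1 h1 j2 h2 he
      have e1 := Nat.nth_count (p := p) h1.1
      have e2 := Nat.nth_count (p := p) h2.1
      rw [← e1, ← e2]
      exact congrArg _ he
  rw [← hcard]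
  exact dc_eq_Iio hdc hSfin

lemma preimage_le_eq (hp : (setOf p).Infinite) (hv : Monotone v) (a : ℝ) (hfin : {j | p j ∧ v j ≤ a}.Finite) :
    {i : ℕ | v (Nat.nth p i) ≤ a} = Set.Iio {j | p j ∧ v j ≤ a}.ncard := by
  have hinj := Nat.nth_injective hp
  have hpre : {i : ℕ | v (Nat.nth p i) ≤ a} = Nat.nth p ⁻¹' {j | p j ∧ v j ≤ a} := by
    ext i
    simp only [Set.mem_setOf_eq, Set.mem_preimage]
    exact ⟨fun h => ⟨Nat.nth_mem_of_infinite hp i, h⟩, fun h => h.2⟩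
  have hdc : ∀ ⦃i j : ℕ⦄, i ≤ j → j ∈ {i : ℕ | v (Nat.nth p i) ≤ a} →
      i ∈ {i : ℕ | v (Nat.nth p i) ≤ a} := by
    intro i j hij hj
    exact le_trans (hv ((Nat.nth_monotone hp) hij)) hj
  have hSfin : {i : ℕ | v (Nat.nth p i) ≤ a}.Finite := by
    rw [hpre]; exact hfin.preimage hinj.injOn
  have hcard : {i : ℕ | v (Nat.nth p i) ≤ a}.ncard = {j | p j ∧ v j ≤ a}.ncard := by
    rw [hpre]
    refine le_antisymm (Set.ncard_le_ncard_of_injOn (Nat.nth p) (fun i hi => hi) hinj.injOn hfin)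
      ?_
    classical
    refine Set.ncard_le_ncard_of_injOn (fun j => Nat.count p j) ?_ ?_ (hfin.preimage hinj.injOn)
    · intro j hj
      have := Nat.nth_count (p := p) hj.1
      simp only [Set.mem_preimage, Set.mem_setOf_eq, this]
      exact hj
    · intro j1 h1 j2 h2 he
      have e1 := Nat.nth_count (p := p) h1.1
      have e2 := Nat.nth_count (p := p) h2.1
      rw [← e1, ← e2]
      exact congrArg _ he
  rw [← hcard]
  exact dc_eq_Iio hdc hSfin

end Counting

section Counting2

variable {p : ℕ → Prop} {v : ℕ → ℝ}

lemma setOf_le_split (a : ℝ) :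
    {j | p j ∧ v j ≤ a} = {j | p j ∧ v j < a} ∪ {j | p j ∧ v j = a} := by
  ext j
  simp only [Set.mem_setOf_eq, Set.mem_union]
  constructor
  · rintro ⟨hj, hle⟩
    rcases lt_or_eq_of_le hle with h | h
    · exact Or.inl ⟨hj, h⟩
    · exact Or.inr ⟨hj, h⟩
  · rintro (⟨hj, h⟩ | ⟨hj, h⟩)
    · exact ⟨hj, le_of_lt h⟩
    · exact ⟨hj, le_of_eq h⟩

lemma setOf_eq_diff (a : ℝ) :
    {i : ℕ | v (Nat.nth p i) = a} =
      {i : ℕ | v (Nat.nth p i) ≤ a} \ {i : ℕ | v (Nat.nth p i) < a} := by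
  ext i
  simp only [Set.mem_setOf_eq, Set.mem_diff, not_lt]
  constructor
  · intro h; exact ⟨le_of_eq h, le_of_eq h.symm⟩
  · intro ⟨h1, h2⟩; exact le_antisymm h1 h2

lemma preimage_eq_eq_Ico (hp : (setOf p).Infinite) (hv : Monotone v) (a : ℝ)
    (hlt : {j | p j ∧ v j < a}.Finite) (heq : {j | p j ∧ v j = a}.Finite) :
    {i : ℕ | v (Nat.nth p i) = a} =
      Set.Ico {j | p j ∧ v j < a}.ncard
        ({j | p j ∧ v j < a}.ncard + {j | p j ∧ v j = a}.ncard) := by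
  have hle : {j | p j ∧ v j ≤ a}.Finite := by
    rw [setOf_le_split a]; exact hlt.union heq
  have hdisj : Disjoint {j | p j ∧ v j < a} {j | p j ∧ v j = a} := by
    rw [Set.disjoint_left]
    rintro j ⟨_, h1⟩ ⟨_, h2⟩
    exact absurd h2 (ne_of_lt h1).symm.symm
  have hcard : {j | p j ∧ v j ≤ a}.ncard =
      {j | p j ∧ v j < a}.ncard + {j | p j ∧ v j = a}.ncard := by
    rw [setOf_le_split a, Set.ncard_union_eq hdisj hlt heq]
  rw [setOf_eq_diff a, preimage_le_eq hp hv a hle, preimage_lt_eq hp hv a hlt, hcard]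
  ext i; simp only [Set.mem_diff, Set.mem_Iio, Set.mem_Ico, not_lt]; tauto

lemma preimage_eq_eq_Ici (hp : (setOf p).Infinite) (hv : Monotone v) (a : ℝ)
    (hlt : {j | p j ∧ v j < a}.Finite) (heq : {j | p j ∧ v j = a}.Infinite) :
    {i : ℕ | v (Nat.nth p i) = a} = Set.Ici {j | p j ∧ v j < a}.ncard := by
  classical
  have hSle : {i : ℕ | v (Nat.nth p i) ≤ a}.Infinite := by
    have himg : (fun j => Nat.count p j) '' {j | p j ∧ v j = a} ⊆
        {i : ℕ | v (Nat.nth p i) ≤ a} := by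
      rintro i ⟨j, hj, rfl⟩
      simp only [Set.mem_setOf_eq]
      rw [Nat.nth_count hj.1]
      exact le_of_eq hj.2
    have hinj : Set.InjOn (fun j => Nat.count p j) {j | p j ∧ v j = a} := by
      intro j1 h1 j2 h2 he
      have e1 := Nat.nth_count (p := p) h1.1
      have e2 := Nat.nth_count (p := p) h2.1
      rw [← e1, ← e2]
      exact congrArg _ he
    exact Set.Infinite.mono himg (Set.Infinite.image hinj heq)
  have hdc : ∀ ⦃i j : ℕ⦄, i ≤ j → j ∈ {i : ℕ | v (Nat.nth p i) ≤ a} →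
      i ∈ {i : ℕ | v (Nat.nth p i) ≤ a} := by
    intro i j hij hj
    exact le_trans (hv ((Nat.nth_monotone hp) hij)) hj
  have huniv := dc_eq_univ hdc hSle
  rw [setOf_eq_diff a, huniv, preimage_lt_eq hp hv a hlt]
  ext i
  simp [not_lt]

end Counting2

lemma shufflePrefix_congr {x y : ℕ → ℕ} {j : ℕ} (h : ∀ m < j, x m = y m) :
    shufflePrefix x j = shufflePrefix y j := by
  induction j with
  | zero => rfl
  | succ j ih =>
    have hj := ih (fun m hm => h m (by omega))
    show shufflePrefix x j ++ _ = shufflePrefix y j ++ _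
    rw [hj, h j (by omega)]

lemma shuffleSeq_congr {x y : ℕ → ℕ} {j : ℕ} (h : ∀ m ≤ j, x m = y m) :
    shuffleSeq x j = shuffleSeq y j := by
  unfold shuffleSeq
  rw [shufflePrefix_congr (fun m hm => h m (by omega)), h j le_rfl]

section Geom

variable {Ω : Type*} [MeasurableSpace Ω] {P : Measure Ω} [IsProbabilityMeasure P]
  {q : ℝ} (hq0 : 0 < q) (hq1 : q < 1)
  {f : Ω → ℕ} (hf : Measurable f)
  (hgeo : ∀ i : ℕ, P {ω | f ω = i} = ENNReal.ofReal ((1 - q) * q ^ i))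

lemma geomSumIco (s k : ℕ) :
    ∑ i ∈ Finset.Ico s (s + k), (1 - q) * q ^ i = q ^ s * (1 - q ^ k) := by
  induction k with
  | zero => simp
  | succ k ih =>
    rw [show s + (k+1) = (s+k) + 1 from rfl, Finset.sum_Ico_succ_top (by omega), ih,
      pow_succ, pow_add]
    ring

set_option linter.unusedSectionVars false in
include hq0 hq1 hf hgeo in
lemma meas_preimage_finset (s : Finset ℕ) :
    P (f ⁻¹' ↑s) = ENNReal.ofReal (∑ i ∈ s, (1 - q) * q ^ i) := by
  have : f ⁻¹' ↑s = ⋃ i ∈ s, f ⁻¹' {i} := by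
    ext ω; simp
  rw [this, measure_biUnion_finset ?_ (fun i _ => hf (measurableSet_singleton i))]
  · rw [ENNReal.ofReal_sum_of_nonneg ?_]
    · refine Finset.sum_congr rfl (fun i _ => ?_)
      rw [← hgeo i]; rfl
    · intro i _
      exact mul_nonneg (by linarith) (pow_nonneg hq0.le i)
  · intro i _ j _ hij
    refine Set.disjoint_left.2 (fun ω h1 h2 => ?_)
    simp only [Set.mem_preimage, Set.mem_singleton_iff] at h1 h2
    exact hij (h1 ▸ h2 ▸ rfl)

include hq0 hq1 hf hgeo in
lemma meas_preimage_Ico (s k : ℕ) :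
    P (f ⁻¹' Set.Ico s (s + k)) = ENNReal.ofReal (q ^ s * (1 - q ^ k)) := by
  have : (Set.Ico s (s+k)) = ↑(Finset.Ico s (s+k)) := by simp
  rw [this, meas_preimage_finset hq0 hq1 hf hgeo, geomSumIco]

include hq0 hq1 hf hgeo in
lemma meas_preimage_Ici (s : ℕ) :
    P (f ⁻¹' Set.Ici s) = ENNReal.ofReal (q ^ s) := by
  have hIio : P (f ⁻¹' Set.Iio s) = ENNReal.ofReal (1 - q ^ s) := by
    have h0 : Set.Iio s = Set.Ico 0 (0 + s) := by ext i; simp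
    rw [h0, meas_preimage_Ico hq0 hq1 hf hgeo, pow_zero, one_mul]
  have hcompl : f ⁻¹' Set.Ici s = (f ⁻¹' Set.Iio s)ᶜ := by
    ext ω; simp [not_lt]
  rw [hcompl, measure_compl (hf measurableSet_Iio) (measure_ne_top _ _), hIio,
    measure_univ, ← ENNReal.ofReal_one,
    ← ENNReal.ofReal_sub _ (by nlinarith [pow_le_one₀ hq0.le hq1.le (n := s), pow_nonneg hq0.le s] : (0:ℝ) ≤ 1 - q ^ s)]
  congr 1
  ring

end Geom

section PerY

variable {v : ℕ → ℝ} {U : ℕ → ℝ} {Y : ℕ → ℕ} {n : ℕ}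

lemma setminus_eval (hgood : ∀ m < n, v (shuffleSeq Y m) = U m) (r : ℝ → Prop) :
    {j : ℕ | j ∉ shufflePrefix Y n ∧ r (v j)} =
      {j : ℕ | r (v j)} \ (shuffleSeq Y '' {m | m < n ∧ r (U m)}) := by
  ext j
  simp only [Set.mem_setOf_eq, Set.mem_diff, Set.mem_image]
  constructor
  · rintro ⟨hp, hr⟩
    refine ⟨hr, ?_⟩
    rintro ⟨m, ⟨hm, _⟩, he⟩
    exact hp ((mem_shufflePrefix_iff Y).2 ⟨m, hm, he⟩)
  · rintro ⟨hr, hnot⟩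
    refine ⟨?_, hr⟩
    intro hmem
    obtain ⟨m, hm, he⟩ := (mem_shufflePrefix_iff Y).1 hmem
    refine hnot ⟨m, ⟨hm, ?_⟩, he⟩
    rw [← hgood m hm, he]
    exact hr

lemma image_card_eval (r : ℝ → Prop) [DecidablePred fun m => r (U m)] :
    (shuffleSeq Y '' {m | m < n ∧ r (U m)}).ncard =
      ((Finset.range n).filter (fun m => r (U m))).card := by
  rw [Set.ncard_image_of_injOn]
  · have : {m | m < n ∧ r (U m)} = ↑((Finset.range n).filter (fun m => r (U m))) := by
      ext m; simp [and_comm]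
    rw [this, Set.ncard_coe_finset]
  · intro i _ j _ hij
    by_contra hne
    rcases Nat.lt_or_ge i j with h | h
    · exact shuffleSeq_injOn Y h hij
    · exact shuffleSeq_injOn Y (by omega : j < i) hij.symm

lemma image_subset_eval (hgood : ∀ m < n, v (shuffleSeq Y m) = U m) (r : ℝ → Prop) :
    shuffleSeq Y '' {m | m < n ∧ r (U m)} ⊆ {j : ℕ | r (v j)} := by
  rintro j ⟨m, ⟨hm, hr⟩, rfl⟩
  simp only [Set.mem_setOf_eq]
  rw [hgood m hm]
  exact hr

lemma ncard_perY (hgood : ∀ m < n, v (shuffleSeq Y m) = U m) (r : ℝ → Prop)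
    [DecidablePred fun m => r (U m)] (hfin : {j : ℕ | r (v j)}.Finite) :
    {j : ℕ | j ∉ shufflePrefix Y n ∧ r (v j)}.ncard =
      {j : ℕ | r (v j)}.ncard - ((Finset.range n).filter (fun m => r (U m))).card ∧
    ((Finset.range n).filter (fun m => r (U m))).card ≤ {j : ℕ | r (v j)}.ncard := by
  have himg := image_subset_eval hgood r
  have h1 : ({j : ℕ | r (v j)} \ (shuffleSeq Y '' {m | m < n ∧ r (U m)})).ncard =
      {j : ℕ | r (v j)}.ncard - (shuffleSeq Y '' {m | m < n ∧ r (U m)}).ncard :=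
    Set.ncard_diff himg (((Set.finite_Iio n).subset (fun m hm => hm.1)).image _)
  have h2 : (shuffleSeq Y '' {m | m < n ∧ r (U m)}).ncard ≤ {j : ℕ | r (v j)}.ncard :=
    Set.ncard_le_ncard himg hfin
  rw [setminus_eval hgood r, h1, image_card_eval r]
  exact ⟨rfl, (image_card_eval (U := U) (Y := Y) r) ▸ h2⟩

lemma infinite_perY (hgood : ∀ m < n, v (shuffleSeq Y m) = U m) (r : ℝ → Prop)
    (hinf : {j : ℕ | r (v j)}.Infinite) :
    {j : ℕ | j ∉ shufflePrefix Y n ∧ r (v j)}.Infinite := by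
  rw [setminus_eval hgood r]
  refine Set.Infinite.diff hinf ?_
  exact Set.Finite.image _ ((Set.finite_Iio n).subset (fun m hm => hm.1))

end PerY

section StepEval

variable {Ω : Type*} [MeasurableSpace Ω] {P : Measure Ω} [IsProbabilityMeasure P]
  {q : ℝ} {v : ℕ → ℝ} {U : ℕ → ℝ} {Y : ℕ → ℕ} {n : ℕ}

lemma encard_eq_ncard {α : Type*} {s : Set α} (h : s.Finite) : s.encard = (s.ncard : ℕ∞) := by
  rw [h.encard_eq_coe_toFinset_card, Set.ncard_eq_toFinset_card _ h]

lemma lt_finite (hv : Monotone v) {a : ℝ} (ha : a ∈ Set.range v) : {j : ℕ | v j < a}.Finite := by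
  obtain ⟨j0, rfl⟩ := ha
  refine (Set.finite_Iio j0).subset (fun j hj => ?_)
  simp only [Set.mem_setOf_eq] at hj
  simp only [Set.mem_Iio]
  by_contra h
  push_neg at h
  exact absurd (hv h) (not_le.2 hj)

lemma step_eval (hq0 : 0 < q) (hq1 : q < 1)
    {f : Ω → ℕ} (hf : Measurable f)
    (hgeo : ∀ i : ℕ, P {ω | f ω = i} = ENNReal.ofReal ((1 - q) * q ^ i))
    (hv : Monotone v)
    (hgood : ∀ m < n, v (shuffleSeq Y m) = U m) (ha : U n ∈ Set.range v) :
    P (f ⁻¹' {i : ℕ | v (Nat.nth (fun m => m ∉ shufflePrefix Y n) i) = U n}) =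
      ENNReal.ofReal
        (q ^ ({j : ℕ | v j < U n}.ncard -
            ((Finset.range n).filter (fun m => U m < U n)).card) *
          (1 - qpowE q ({j : ℕ | v j = U n}.encard -
            (((Finset.range n).filter (fun m => U m = U n)).card : ℕ∞)))) := by
  classical
  set a := U n with ha_def
  set p : ℕ → Prop := fun m => m ∉ shufflePrefix Y n with hp_def
  have hpinf : (setOf p).Infinite := notMem_infinite _
  have hltfin : {j : ℕ | v j < a}.Finite := lt_finite hv ha
  have hpltfin : {j : ℕ | p j ∧ v j < a}.Finite :=
    hltfin.subset (fun j hj => hj.2)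
  set cLt := ((Finset.range n).filter (fun m => U m < a)).card with hcLt
  set cEq := ((Finset.range n).filter (fun m => U m = a)).card with hcEq
  have hlt := ncard_perY (v := v) hgood (fun t => t < a) hltfin
  have hs : {j : ℕ | p j ∧ v j < a}.ncard = {j : ℕ | v j < a}.ncard - cLt := hlt.1
  set s := {j : ℕ | v j < a}.ncard - cLt with hs_def
  by_cases hfin : {j : ℕ | v j = a}.Finite
  · -- finite case
    have heqfin : {j : ℕ | p j ∧ v j = a}.Finite := hfin.subset (fun j hj => hj.2)
    have heq := ncard_perY (v := v) hgood (fun t => t = a) hfin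
    have hk : {j : ℕ | p j ∧ v j = a}.ncard = {j : ℕ | v j = a}.ncard - cEq := heq.1
    have hSet := preimage_eq_eq_Ico hpinf hv a hpltfin heqfin
    rw [hs, hk] at hSet
    have hmeas : P (f ⁻¹' {i : ℕ | v (Nat.nth p i) = a}) =
        ENNReal.ofReal (q ^ s * (1 - q ^ ({j : ℕ | v j = a}.ncard - cEq))) := by
      rw [hSet, meas_preimage_Ico hq0 hq1 hf hgeo]
    have hqp : qpowE q ({j : ℕ | v j = a}.encard - (cEq : ℕ∞)) =
        q ^ ({j : ℕ | v j = a}.ncard - cEq) := by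
      rw [encard_eq_ncard hfin, ← ENat.coe_sub]
      simp only [qpowE, ENat.coe_sub]
      norm_cast
    rw [hmeas, hqp]
  · -- infinite case
    have heqinf : {j : ℕ | p j ∧ v j = a}.Infinite :=
      infinite_perY hgood (fun t => t = a) hfin
    have hSet := preimage_eq_eq_Ici hpinf hv a hpltfin heqinf
    rw [hs] at hSet
    have htop : {j : ℕ | v j = a}.encard - (cEq : ℕ∞) = ⊤ := by
      rw [Set.Infinite.encard_eq hfin]
      simp
    rw [hSet, meas_preimage_Ici hq0 hq1 hf hgeo, htop]
    simp [qpowE]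

end StepEval
set_option linter.unusedSectionVars false
section Induction

variable {Ω : Type*} [MeasurableSpace Ω] {P : Measure Ω} [IsProbabilityMeasure P]
  {q : ℝ} {ξ : ℕ → Ω → ℕ} {v : ℕ → ℝ}

lemma cyl_measurable (hmeas : ∀ j, Measurable (ξ j)) (n : ℕ) (y : ℕ → ℕ) :
    MeasurableSet {ω | ∀ m < n, ξ m ω = y m} := by
  have : {ω | ∀ m < n, ξ m ω = y m} = ⋂ m ∈ Set.Iio n, (ξ m) ⁻¹' {y m} := by
    ext ω; simp
  rw [this]
  exact MeasurableSet.biInter (Set.to_countable _)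
    (fun m _ => hmeas m (measurableSet_singleton _))

lemma indep_cyl (hindep : iIndepFun ξ P) (n : ℕ) (y : ℕ → ℕ)
    (S : Set ℕ) :
    P ({ω | ∀ m < n, ξ m ω = y m} ∩ (ξ n) ⁻¹' S) =
      P {ω | ∀ m < n, ξ m ω = y m} * P ((ξ n) ⁻¹' S) := by
  classical
  set sets : ℕ → Set ℕ := fun i => if i = n then S else {y i} with hsets
  have hmble : ∀ i, i ∈ Finset.range (n+1) → MeasurableSet (sets i) :=
    fun i _ => (Set.to_countable _).measurableSet
  have hmble' : ∀ i, i ∈ Finset.range n → MeasurableSet (sets i) :=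
    fun i _ => (Set.to_countable _).measurableSet
  have h1 := hindep.measure_inter_preimage_eq_mul (Finset.range (n+1)) hmble
  have h2 := hindep.measure_inter_preimage_eq_mul (Finset.range n) hmble'
  have e1 : (⋂ i ∈ Finset.range (n+1), ξ i ⁻¹' sets i) =
      {ω | ∀ m < n, ξ m ω = y m} ∩ (ξ n) ⁻¹' S := by
    ext ω
    simp only [Set.mem_iInter, Finset.mem_range, Set.mem_inter_iff, Set.mem_preimage,
      Set.mem_setOf_eq, hsets]
    constructor
    · intro h
      refine ⟨fun m hm => ?_, ?_⟩
      · have := h m (by omega)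
        rw [if_neg (by omega)] at this
        simpa using this
      · have := h n (by omega)
        rwa [if_pos rfl] at this
    · rintro ⟨h, hn⟩ i hi
      by_cases hin : i = n
      · subst hin; rwa [if_pos rfl]
      · rw [if_neg hin]; simpa using h i (by omega)
  have e2 : (⋂ i ∈ Finset.range n, ξ i ⁻¹' sets i) = {ω | ∀ m < n, ξ m ω = y m} := by
    ext ω
    simp only [Set.mem_iInter, Finset.mem_range, Set.mem_setOf_eq, hsets]
    constructor
    · intro h m hm
      have := h m hm
      rw [if_neg (by omega)] at this
      simpa using this
    · intro h i hi
      rw [if_neg (by omega)]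
      simpa using h i hi
  rw [e1] at h1
  rw [e2] at h2
  rw [h1, Finset.prod_range_succ, ← h2]
  congr 1
  rw [hsets]
  simp

lemma partition_sum (hmeas : ∀ j, Measurable (ξ j)) (n : ℕ) {T : Set Ω}
    (hT : MeasurableSet T) :
    P T = ∑' y : Fin n → ℕ,
      P ({ω | ∀ m < n, ξ m ω = (fun t => if h : t < n then y ⟨t, h⟩ else 0) m} ∩ T) := by
  have hun : (⋃ y : Fin n → ℕ,
      ({ω | ∀ m < n, ξ m ω = (fun t => if h : t < n then y ⟨t, h⟩ else 0) m} ∩ T)) = T := by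
    ext ω
    simp only [Set.mem_iUnion, Set.mem_inter_iff, Set.mem_setOf_eq]
    constructor
    · rintro ⟨y, _, hT'⟩; exact hT'
    · intro hT'
      refine ⟨fun m => ξ m ω, fun m hm => ?_, hT'⟩
      rw [dif_pos hm]
  have hdis : Pairwise (Function.onFun Disjoint (fun y : Fin n → ℕ =>
      {ω | ∀ m < n, ξ m ω = (fun t => if h : t < n then y ⟨t, h⟩ else 0) m} ∩ T)) := by
    intro y z hyz
    obtain ⟨m, hm⟩ := Function.ne_iff.1 hyz
    refine Set.disjoint_left.2 (fun ω h1 h2 => ?_)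
    have ey : ∀ (w : Fin n → ℕ),
        (fun t => if h : t < n then w ⟨t, h⟩ else 0) (m : ℕ) = w m := by
      intro w; simp [m.isLt]
    have e1 := (h1.1 m m.isLt).trans (ey y)
    have e2 := (h2.1 m m.isLt).trans (ey z)
    exact hm (e1.symm.trans e2)
  conv_lhs => rw [← hun]
  rw [measure_iUnion hdis (fun y => (cyl_measurable hmeas n _).inter hT)]

lemma G_measurable (hmeas : ∀ j, Measurable (ξ j)) (m : ℕ) :
    Measurable (fun ω => v (shuffleSeq (fun t => ξ t ω) m)) := by
  have heq : (fun ω => v (shuffleSeq (fun t => ξ t ω) m)) =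
      (fun y : Fin (m+1) → ℕ =>
        v (shuffleSeq (fun t => if h : t < m+1 then y ⟨t, h⟩ else 0) m)) ∘
      (fun ω (t : Fin (m+1)) => ξ t ω) := by
    funext ω
    simp only [Function.comp_apply]
    congr 1
    apply shuffleSeq_congr
    intro t ht
    rw [dif_pos (by omega)]
  rw [heq]
  exact (measurable_of_countable _).comp (measurable_pi_lambda _ (fun t => hmeas t))

lemma E_measurable (hmeas : ∀ j, Measurable (ξ j)) (U : ℕ → ℝ) (N : ℕ) :
    MeasurableSet {ω | ∀ m < N, v (shuffleSeq (fun t => ξ t ω) m) = U m} := by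
  have : {ω | ∀ m < N, v (shuffleSeq (fun t => ξ t ω) m) = U m} =
      ⋂ m ∈ Set.Iio N, (fun ω => v (shuffleSeq (fun t => ξ t ω) m)) ⁻¹' {U m} := by
    ext ω; simp
  rw [this]
  exact MeasurableSet.biInter (Set.to_countable _)
    (fun m _ => G_measurable hmeas m (measurableSet_singleton _))

lemma main_ind (hq0 : 0 < q) (hq1 : q < 1) (hmeas : ∀ j, Measurable (ξ j))
    (hindep : iIndepFun ξ P)
    (hgeom : ∀ j i : ℕ, P {ω | ξ j ω = i} = ENNReal.ofReal ((1 - q) * q ^ i))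
    (hv : Monotone v) (U : ℕ → ℝ) (n : ℕ) (hU : ∀ m < n, U m ∈ Set.range v) :
    P {ω | ∀ m < n, v (shuffleSeq (fun t => ξ t ω) m) = U m} =
      ∏ m ∈ Finset.range n, ENNReal.ofReal
        (q ^ ({j : ℕ | v j < U m}.ncard -
            ((Finset.range m).filter (fun m' => U m' < U m)).card) *
          (1 - qpowE q ({j : ℕ | v j = U m}.encard -
            (((Finset.range m).filter (fun m' => U m' = U m)).card : ℕ∞)))) := by
  induction n with
  | zero =>
    have : {ω : Ω | ∀ m < 0, v (shuffleSeq (fun t => ξ t ω) m) = U m} = Set.univ := by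
      ext ω; simp
    rw [this, measure_univ, Finset.prod_range_zero]
  | succ n ih =>
    set c : ENNReal := ENNReal.ofReal
        (q ^ ({j : ℕ | v j < U n}.ncard -
            ((Finset.range n).filter (fun m' => U m' < U n)).card) *
          (1 - qpowE q ({j : ℕ | v j = U n}.encard -
            (((Finset.range n).filter (fun m' => U m' = U n)).card : ℕ∞)))) with hc
    set E := {ω : Ω | ∀ m < n, v (shuffleSeq (fun t => ξ t ω) m) = U m} with hE
    set E' := {ω : Ω | ∀ m < n + 1, v (shuffleSeq (fun t => ξ t ω) m) = U m} with hE'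
    have key : ∀ y : Fin n → ℕ,
        P ({ω | ∀ m < n, ξ m ω = (fun t => if h : t < n then y ⟨t, h⟩ else 0) m} ∩ E') =
        c * P ({ω | ∀ m < n, ξ m ω = (fun t => if h : t < n then y ⟨t, h⟩ else 0) m} ∩ E) := by
      intro y
      set Yy : ℕ → ℕ := fun t => if h : t < n then y ⟨t, h⟩ else 0 with hYy
      set C := {ω | ∀ m < n, ξ m ω = Yy m} with hC
      have hagree : ∀ ω ∈ C, ∀ m < n,
          shuffleSeq (fun t => ξ t ω) m = shuffleSeq Yy m := by
        intro ω hω m hm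
        exact shuffleSeq_congr (fun t ht => hω t (by omega))
      by_cases hgood : ∀ m < n, v (shuffleSeq Yy m) = U m
      · have hsub : C ⊆ E := by
          intro ω hω m hm
          rw [hagree ω hω m hm]
          exact hgood m hm
        have hCE : C ∩ E = C := Set.inter_eq_left.2 hsub
        set S := {i : ℕ | v (Nat.nth (fun mm => mm ∉ shufflePrefix Yy n) i) = U n} with hS
        have hCE' : C ∩ E' = C ∩ (ξ n) ⁻¹' S := by
          ext ω
          simp only [Set.mem_inter_iff, Set.mem_preimage, hS, Set.mem_setOf_eq, hE']
          constructor
          · rintro ⟨hω, h'⟩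
            refine ⟨hω, ?_⟩
            have hn := h' n (by omega)
            have hpre : shufflePrefix (fun t => ξ t ω) n = shufflePrefix Yy n :=
              shufflePrefix_congr (fun t ht => hω t ht)
            rw [show shuffleSeq (fun t => ξ t ω) n =
                Nat.nth (fun mm => mm ∉ shufflePrefix (fun t => ξ t ω) n) (ξ n ω) from rfl,
              hpre] at hn
            exact hn
          · rintro ⟨hω, h'⟩
            refine ⟨hω, fun m hm => ?_⟩
            rcases Nat.lt_or_ge m n with h | h
            · exact hsub hω m h
            · have hmn : m = n := by omega
              subst hmn
              have hpre : shufflePrefix (fun t => ξ t ω) m = shufflePrefix Yy m :=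
                shufflePrefix_congr (fun t ht => hω t ht)
              rw [show shuffleSeq (fun t => ξ t ω) m =
                  Nat.nth (fun mm => mm ∉ shufflePrefix (fun t => ξ t ω) m) (ξ m ω) from rfl,
                hpre]
              exact h'
        have hstep : P ((ξ n) ⁻¹' S) = c :=
          step_eval hq0 hq1 (hmeas n) (hgeom n) hv hgood (hU n (by omega))
        rw [hCE', indep_cyl hindep n Yy S, hstep, hCE, mul_comm]
      · have hCEe : C ∩ E = ∅ := by
          by_contra h
          obtain ⟨ω, hω, hωE⟩ := Set.nonempty_iff_ne_empty.2 h
          refine hgood (fun m hm => ?_)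
          rw [← hagree ω hω m hm]
          exact hωE m hm
        have hCE'e : C ∩ E' = ∅ := by
          have hsub' : E' ⊆ E := fun ω hω m hm => hω m (by omega)
          rw [← Set.subset_empty_iff, ← hCEe]
          exact Set.inter_subset_inter_right _ hsub'
        rw [hCEe, hCE'e]
        simp
    have hPE' : P E' = c * P E := by
      have h1 := partition_sum (P := P) hmeas n (E_measurable (v := v) hmeas U (n+1))
      have h2 := partition_sum (P := P) hmeas n (E_measurable (v := v) hmeas U n)
      rw [← hE'] at h1
      rw [← hE] at h2
      rw [h1, h2, ← ENNReal.tsum_mul_left]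
      exact tsum_congr key
    rw [hPE', ih (fun m hm => hU m (by omega)), Finset.prod_range_succ, mul_comm]

end Induction

lemma qpowE_coe (q : ℝ) (k : ℕ) : qpowE q (k : ℕ∞) = q ^ k := by
  simp [qpowE]

lemma qpowE_top (q : ℝ) : qpowE q ⊤ = 0 := by simp [qpowE]

lemma qpowE_nonneg {q : ℝ} (hq : 0 ≤ q) (k : ℕ∞) : 0 ≤ qpowE q k := by
  unfold qpowE
  split
  · exact le_refl 0
  · exact pow_nonneg hq _

lemma qpowE_le_one {q : ℝ} (hq0 : 0 ≤ q) (hq1 : q ≤ 1) (k : ℕ∞) : qpowE q k ≤ 1 := by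
  unfold qpowE
  split
  · norm_num
  · exact pow_le_one₀ hq0 hq1

lemma qpowE_sub {q : ℝ} (hq : q ≠ 0) {k : ℕ∞} {i : ℕ} (hi : (i : ℕ∞) ≤ k) :
    qpowE q (k - i) = qpowE q k * q⁻¹ ^ i := by
  cases k with
  | top => rw [qpowE_top, ENat.top_sub_coe, qpowE_top, zero_mul]
  | coe kk =>
    have hik : i ≤ kk := by exact_mod_cast hi
    rw [← ENat.coe_sub, qpowE_coe, qpowE_coe, pow_sub₀ q hq hik, inv_pow]

lemma prod_fiber_rank {α : Type*} [LinearOrder α] [DecidableEq α] (s : Finset α) (f : ℕ → ℝ) :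
    ∏ m ∈ s, f ((s.filter (fun x => x < m)).card) = ∏ i ∈ Finset.range s.card, f i := by
  classical
  set e := s.orderEmbOfFin rfl with he
  have hkey : ∀ i : Fin s.card, (s.filter (fun x => x < e i)).card = (i : ℕ) := by
    intro i
    have himg : s.filter (fun x => x < e i) =
        (Finset.univ.filter (fun j : Fin s.card => j < i)).image (fun j => e j) := by
      ext x
      simp only [Finset.mem_filter, Finset.mem_image, Finset.mem_univ, true_and]
      constructor
      · rintro ⟨hxs, hlt⟩
        have : x ∈ Set.range e := by
          rw [Finset.range_orderEmbOfFin]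
          exact hxs
        obtain ⟨j, rfl⟩ := this
        exact ⟨j, (e.lt_iff_lt).1 hlt, rfl⟩
      · rintro ⟨j, hj, rfl⟩
        exact ⟨Finset.orderEmbOfFin_mem s rfl j, (e.lt_iff_lt).2 hj⟩
    rw [himg, Finset.card_image_of_injective _ e.injective]
    have : Finset.univ.filter (fun j : Fin s.card => j < i) = Finset.Iio i := by
      ext j; simp
    rw [this, Fin.card_Iio]
  refine (Finset.prod_bij (fun (i : ℕ) (hi : i ∈ Finset.range s.card) =>
      e ⟨i, Finset.mem_range.1 hi⟩) ?_ ?_ ?_ ?_).symm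
  · intro i hi
    exact Finset.orderEmbOfFin_mem s rfl _
  · intro i hi j hj hij
    have := e.injective hij
    simpa using congrArg Fin.val this
  · intro x hx
    have : x ∈ Set.range e := by rw [Finset.range_orderEmbOfFin]; exact hx
    obtain ⟨j, rfl⟩ := this
    exact ⟨(j : ℕ), Finset.mem_range.2 j.isLt, by simp⟩
  · intro i hi
    rw [hkey ⟨i, Finset.mem_range.1 hi⟩]

section Alg
variable {q : ℝ} {n : ℕ} {u : Fin n → ℝ} {v : ℕ → ℝ}

lemma prod_B (hq0 : 0 < q) (u : Fin n → ℝ) (v : ℕ → ℝ) :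
    ∏ m : Fin n, (1 - qpowE q ({j : ℕ | v j = u m}.encard -
        ((Finset.univ.filter (fun m' : Fin n => m' < m ∧ u m' = u m)).card : ℕ∞))) =
    ∏ a ∈ Finset.univ.image u,
      ∏ i ∈ Finset.range ((Finset.univ.filter (fun m : Fin n => u m = a)).card),
        (1 - qpowE q {j : ℕ | v j = a}.encard * q⁻¹ ^ i) := by
  classical
  rw [← Finset.prod_fiberwise_of_maps_to
    (fun m (_ : m ∈ Finset.univ) => Finset.mem_image_of_mem u (Finset.mem_univ m))
    (fun m => (1 - qpowE q ({j : ℕ | v j = u m}.encard -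
        ((Finset.univ.filter (fun m' : Fin n => m' < m ∧ u m' = u m)).card : ℕ∞))))]
  refine Finset.prod_congr rfl (fun a _ => ?_)
  set fib := Finset.univ.filter (fun m : Fin n => u m = a) with hfib
  have hstep1 : ∏ m ∈ fib, (1 - qpowE q ({j : ℕ | v j = u m}.encard -
      ((Finset.univ.filter (fun m' : Fin n => m' < m ∧ u m' = u m)).card : ℕ∞))) =
      ∏ m ∈ fib, (fun r : ℕ => 1 - qpowE q ({j : ℕ | v j = a}.encard - (r : ℕ∞)))
        ((fib.filter (fun x => x < m)).card) := by
    refine Finset.prod_congr rfl (fun m hm => ?_)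
    have hma : u m = a := (Finset.mem_filter.1 hm).2
    have hfe : Finset.univ.filter (fun m' : Fin n => m' < m ∧ u m' = u m) =
        fib.filter (fun x => x < m) := by
      rw [hfib, Finset.filter_filter]
      refine Finset.filter_congr (fun m' _ => ?_)
      rw [hma]
      tauto
    rw [hfe, hma]
  rw [hstep1, prod_fiber_rank fib (fun r => 1 - qpowE q ({j : ℕ | v j = a}.encard - (r : ℕ∞)))]
  by_cases hcase : ((fib.card : ℕ∞) ≤ {j : ℕ | v j = a}.encard)
  · refine Finset.prod_congr rfl (fun i hi => ?_)
    have hi' : (i : ℕ∞) ≤ {j : ℕ | v j = a}.encard := by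
      refine le_trans ?_ hcase
      exact_mod_cast (Nat.le_of_lt (Finset.mem_range.1 hi))
    rw [qpowE_sub hq0.ne' hi']
  · push_neg at hcase
    have hne : {j : ℕ | v j = a}.encard ≠ ⊤ := by
      intro h
      rw [h] at hcase
      exact absurd hcase (by simp)
    set L0 := ({j : ℕ | v j = a}.encard).toNat with hL0
    have hLe : {j : ℕ | v j = a}.encard = (L0 : ℕ∞) := by
      rw [hL0]
      exact (ENat.coe_toNat hne).symm
    have hL0lt : L0 < fib.card := by
      rw [hLe] at hcase
      exact_mod_cast hcase
    rw [Finset.prod_eq_zero (Finset.mem_range.2 hL0lt) ?_,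
      Finset.prod_eq_zero (Finset.mem_range.2 hL0lt) ?_]
    · rw [hLe, qpowE_coe, inv_pow, mul_inv_cancel₀ (pow_ne_zero _ hq0.ne')]
      ring
    · rw [hLe, ← ENat.coe_sub, Nat.sub_self, qpowE_coe]
      norm_num
end Alg

section Alg2
variable {q : ℝ} {n : ℕ} {u : Fin n → ℝ} {v : ℕ → ℝ}

lemma lt_finite' (hv : Monotone v) {a : ℝ} (ha : a ∈ Set.range v) : {j : ℕ | v j < a}.Finite := by
  obtain ⟨j0, rfl⟩ := ha
  refine (Set.finite_Iio j0).subset (fun j hj => ?_)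
  simp only [Set.mem_setOf_eq] at hj
  simp only [Set.mem_Iio]
  by_contra h
  push_neg at h
  exact absurd (hv h) (not_le.2 hj)

lemma cLt_le (hv : Monotone v) (hu : ∀ m, u m ∈ Set.range v)
    (hB : ∀ a ∈ Finset.univ.image u,
      (((Finset.univ.filter (fun m : Fin n => u m = a)).card : ℕ∞)) ≤ {j : ℕ | v j = a}.encard)
    (m : Fin n) :
    (Finset.univ.filter (fun m' : Fin n => m' < m ∧ u m' < u m)).card ≤
      {j : ℕ | v j < u m}.ncard := by
  classical
  set a := u m with ha
  have hLfin : {j : ℕ | v j < a}.Finite := lt_finite' hv (hu m)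
  have step1 : (Finset.univ.filter (fun m' : Fin n => m' < m ∧ u m' < u m)).card ≤
      (Finset.univ.filter (fun m' : Fin n => u m' < a)).card := by
    refine Finset.card_le_card (fun x hx => ?_)
    simp only [Finset.mem_filter, Finset.mem_univ, true_and] at hx ⊢
    exact hx.2
  set t := (Finset.univ.image u).filter (fun b => b < a) with ht
  have step2 : (Finset.univ.filter (fun m' : Fin n => u m' < a)).card =
      ∑ b ∈ t, ((Finset.univ.filter (fun m' : Fin n => u m' < a)).filter
        (fun m' => u m' = b)).card := by
    refine Finset.card_eq_sum_card_fiberwise (fun x hx => ?_)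
    simp only [Finset.mem_coe, Finset.mem_filter, Finset.mem_univ, true_and] at hx
    simp only [ht, Finset.mem_coe, Finset.mem_filter, Finset.mem_image]
    exact ⟨⟨x, Finset.mem_univ x, rfl⟩, hx⟩
  have step2' : ∀ b ∈ t, ((Finset.univ.filter (fun m' : Fin n => u m' < a)).filter
      (fun m' => u m' = b)).card = (Finset.univ.filter (fun m' : Fin n => u m' = b)).card := by
    intro b hb
    simp only [ht, Finset.mem_filter, Finset.mem_image] at hb
    congr 1
    rw [Finset.filter_filter]
    refine Finset.filter_congr (fun x _ => ?_)
    constructor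
    · tauto
    · intro h
      exact ⟨h ▸ hb.2, h⟩
  have step3 : ∀ b ∈ t, (Finset.univ.filter (fun m' : Fin n => u m' = b)).card ≤
      (hLfin.toFinset.filter (fun j => v j = b)).card := by
    intro b hb
    simp only [ht, Finset.mem_filter, Finset.mem_image] at hb
    obtain ⟨⟨m0, _, hm0⟩, hba⟩ := hb
    have hbfin : {j : ℕ | v j = b}.Finite :=
      hLfin.subset (fun j hj => by simp only [Set.mem_setOf_eq] at hj ⊢; rw [hj]; exact hba)
    have htf : hbfin.toFinset = hLfin.toFinset.filter (fun j => v j = b) := by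
      ext j
      simp only [Set.Finite.mem_toFinset, Finset.mem_filter, Set.mem_setOf_eq]
      constructor
      · intro h; exact ⟨by rw [h]; exact hba, h⟩
      · exact fun h => h.2
    have hBb := hB b (by exact Finset.mem_image.2 ⟨m0, Finset.mem_univ _, hm0⟩)
    rw [hbfin.encard_eq_coe_toFinset_card, htf] at hBb
    exact_mod_cast hBb
  have step4 : ∑ b ∈ t, (hLfin.toFinset.filter (fun j => v j = b)).card ≤
      {j : ℕ | v j < a}.ncard := by
    rw [← Finset.card_biUnion ?_]
    · rw [Set.ncard_eq_toFinset_card _ hLfin]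
      refine Finset.card_le_card (Finset.biUnion_subset.2 (fun b _ => Finset.filter_subset _ _))
    · intro b1 _ b2 _ hne
      refine Finset.disjoint_left.2 (fun j hj1 hj2 => ?_)
      simp only [Finset.mem_filter] at hj1 hj2
      exact hne (hj1.2 ▸ hj2.2 ▸ rfl)
  calc (Finset.univ.filter (fun m' : Fin n => m' < m ∧ u m' < u m)).card
      ≤ (Finset.univ.filter (fun m' : Fin n => u m' < a)).card := step1
    _ = ∑ b ∈ t, ((Finset.univ.filter (fun m' : Fin n => u m' < a)).filter
        (fun m' => u m' = b)).card := step2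
    _ = ∑ b ∈ t, (Finset.univ.filter (fun m' : Fin n => u m' = b)).card :=
        Finset.sum_congr rfl step2'
    _ ≤ ∑ b ∈ t, (hLfin.toFinset.filter (fun j => v j = b)).card :=
        Finset.sum_le_sum step3
    _ ≤ {j : ℕ | v j < a}.ncard := step4

lemma sum_cLt (u : Fin n → ℝ) :
    ∑ m : Fin n, (Finset.univ.filter (fun m' : Fin n => m' < m ∧ u m' < u m)).card =
      (Finset.univ.filter (fun p : Fin n × Fin n => p.1 < p.2 ∧ u p.1 < u p.2)).card := by
  classical
  rw [Finset.card_eq_sum_card_fiberwise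
    (f := Prod.snd) (t := Finset.univ) (fun x _ => Finset.mem_univ _)]
  refine Finset.sum_congr rfl (fun m _ => ?_)
  refine (Finset.card_bij (fun p _ => p.1) ?_ ?_ ?_).symm
  · intro p hp
    simp only [Finset.mem_filter, Finset.mem_univ, true_and] at hp ⊢
    obtain ⟨⟨h1, h2⟩, h3⟩ := hp
    rw [h3] at h1 h2
    exact ⟨h1, h2⟩
  · intro p hp p' hp' he
    simp only [Finset.mem_filter] at hp hp'
    exact Prod.ext he (hp.2.trans hp'.2.symm)
  · intro m' hm'
    simp only [Finset.mem_filter, Finset.mem_univ, true_and] at hm'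
    exact ⟨(m', m), by simp [hm'.1, hm'.2], rfl⟩

lemma T_eq_D (u : Fin n → ℝ) :
    (Finset.univ.filter (fun p : Fin n × Fin n => u p.1 < u p.2)).card =
      ∑ p ∈ ((Finset.univ.image u) ×ˢ (Finset.univ.image u)).filter
          (fun p : ℝ × ℝ => p.1 < p.2),
        (Finset.univ.filter (fun m : Fin n => u m = p.1)).card *
          (Finset.univ.filter (fun m : Fin n => u m = p.2)).card := by
  classical
  rw [Finset.card_eq_sum_card_fiberwise (f := fun p : Fin n × Fin n => (u p.1, u p.2))
    (t := ((Finset.univ.image u) ×ˢ (Finset.univ.image u)).filter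
      (fun p : ℝ × ℝ => p.1 < p.2)) ?_]
  · refine Finset.sum_congr rfl (fun ab hab => ?_)
    simp only [Finset.mem_filter, Finset.mem_product, Finset.mem_image] at hab
    obtain ⟨⟨_, _⟩, hlt⟩ := hab
    have hfe : (Finset.univ.filter (fun p : Fin n × Fin n => u p.1 < u p.2)).filter
        (fun p => (u p.1, u p.2) = ab) =
        Finset.univ.filter (fun p : Fin n × Fin n => u p.1 = ab.1 ∧ u p.2 = ab.2) := by
      rw [Finset.filter_filter]
      refine Finset.filter_congr (fun p _ => ?_)
      constructor
      · rintro ⟨_, h⟩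
        rw [Prod.ext_iff] at h
        exact h
      · rintro ⟨h1, h2⟩
        exact ⟨by rw [h1, h2]; exact hlt, Prod.ext h1 h2⟩
    rw [hfe]
    have : Finset.univ.filter (fun p : Fin n × Fin n => u p.1 = ab.1 ∧ u p.2 = ab.2) =
        (Finset.univ.filter (fun m : Fin n => u m = ab.1)) ×ˢ
          (Finset.univ.filter (fun m : Fin n => u m = ab.2)) := by
      ext p
      simp [Finset.mem_product]
    rw [this, Finset.card_product]
  · intro p hp
    simp only [Finset.mem_coe, Finset.mem_filter, Finset.mem_univ, true_and] at hp
    simp only [Finset.mem_coe, Finset.mem_filter, Finset.mem_product, Finset.mem_image]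
    exact ⟨⟨⟨p.1, Finset.mem_univ _, rfl⟩, ⟨p.2, Finset.mem_univ _, rfl⟩⟩, hp⟩

lemma T_split (u : Fin n → ℝ) :
    (Finset.univ.filter (fun p : Fin n × Fin n => u p.1 < u p.2)).card =
      (Finset.univ.filter (fun p : Fin n × Fin n => p.1 < p.2 ∧ u p.2 < u p.1)).card +
      (Finset.univ.filter (fun p : Fin n × Fin n => p.1 < p.2 ∧ u p.1 < u p.2)).card := by
  classical
  have hsplit : Finset.univ.filter (fun p : Fin n × Fin n => u p.1 < u p.2) =
      (Finset.univ.filter (fun p : Fin n × Fin n => p.2 < p.1 ∧ u p.1 < u p.2)) ∪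
      (Finset.univ.filter (fun p : Fin n × Fin n => p.1 < p.2 ∧ u p.1 < u p.2)) := by
    rw [← Finset.filter_or]
    refine Finset.filter_congr (fun p _ => ?_)
    constructor
    · intro h
      rcases lt_trichotomy p.1 p.2 with h' | h' | h'
      · exact Or.inr ⟨h', h⟩
      · exfalso
        rw [h'] at h
        exact lt_irrefl _ h
      · exact Or.inl ⟨h', h⟩
    · rintro (⟨_, h⟩ | ⟨_, h⟩) <;> exact h
  rw [hsplit, Finset.card_union_of_disjoint ?_]
  · congr 1
    refine Finset.card_bij (fun p _ => (p.2, p.1)) ?_ ?_ ?_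
    · intro p hp
      simp only [Finset.mem_filter, Finset.mem_univ, true_and] at hp ⊢
      exact ⟨hp.1, hp.2⟩
    · intro p hp p' hp' he
      rw [Prod.ext_iff] at he
      exact Prod.ext he.2 he.1
    · intro p hp
      simp only [Finset.mem_filter, Finset.mem_univ, true_and] at hp
      exact ⟨(p.2, p.1), by simp [hp.1, hp.2], rfl⟩
  · refine Finset.disjoint_left.2 (fun p h1 h2 => ?_)
    simp only [Finset.mem_filter] at h1 h2
    exact absurd (h1.2.1.trans h2.2.1) (lt_irrefl _)

lemma prod_qL (hv : Monotone v) (hu : ∀ m, u m ∈ Set.range v) (q : ℝ) :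
    ∏ m : Fin n, q ^ ({j : ℕ | v j < u m}.ncard) =
      ∏ a ∈ Finset.univ.image u,
        qpowE q (((Finset.univ.filter (fun m : Fin n => u m = a)).card : ℕ∞) *
          {j : ℕ | v j < a}.encard) := by
  classical
  rw [← Finset.prod_fiberwise_of_maps_to
    (fun m (_ : m ∈ Finset.univ) => Finset.mem_image_of_mem u (Finset.mem_univ m))
    (fun m => q ^ ({j : ℕ | v j < u m}.ncard))]
  refine Finset.prod_congr rfl (fun a ha => ?_)
  obtain ⟨m0, _, hm0⟩ := Finset.mem_image.1 ha
  have hfin : {j : ℕ | v j < a}.Finite := lt_finite' hv (hm0 ▸ hu m0)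
  have hconst : ∏ m ∈ Finset.univ.filter (fun m : Fin n => u m = a),
      q ^ ({j : ℕ | v j < u m}.ncard) =
      (q ^ ({j : ℕ | v j < a}.ncard)) ^ (Finset.univ.filter (fun m : Fin n => u m = a)).card := by
    rw [Finset.prod_congr rfl (fun m hm => ?_), Finset.prod_const]
    rw [(Finset.mem_filter.1 hm).2]
  rw [hconst, hfin.encard_eq_coe_toFinset_card, ← Set.ncard_eq_toFinset_card _ hfin,
    ← Nat.cast_mul, qpowE_coe, pow_mul']

lemma prod_A (hq0 : 0 < q) (hv : Monotone v) (hu : ∀ m, u m ∈ Set.range v)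
    (hB : ∀ a ∈ Finset.univ.image u,
      (((Finset.univ.filter (fun m : Fin n => u m = a)).card : ℕ∞)) ≤ {j : ℕ | v j = a}.encard) :
    ∏ m : Fin n, q ^ ({j : ℕ | v j < u m}.ncard -
        (Finset.univ.filter (fun m' : Fin n => m' < m ∧ u m' < u m)).card) =
      q ^ ((Finset.univ.filter
          (fun p : Fin n × Fin n => p.1 < p.2 ∧ u p.2 < u p.1)).card) *
        q ^ (-((∑ p ∈ ((Finset.univ.image u) ×ˢ (Finset.univ.image u)).filter
            (fun p : ℝ × ℝ => p.1 < p.2),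
            (Finset.univ.filter (fun m : Fin n => u m = p.1)).card *
              (Finset.univ.filter (fun m : Fin n => u m = p.2)).card : ℕ) : ℤ)) *
        ∏ a ∈ Finset.univ.image u,
          qpowE q (((Finset.univ.filter (fun m : Fin n => u m = a)).card : ℕ∞) *
            {j : ℕ | v j < a}.encard) := by
  classical
  have hfac : ∀ m : Fin n, q ^ ({j : ℕ | v j < u m}.ncard -
      (Finset.univ.filter (fun m' : Fin n => m' < m ∧ u m' < u m)).card) =
      q ^ ({j : ℕ | v j < u m}.ncard) *
        q⁻¹ ^ ((Finset.univ.filter (fun m' : Fin n => m' < m ∧ u m' < u m)).card) := by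
    intro m
    rw [pow_sub₀ q hq0.ne' (cLt_le hv hu hB m), inv_pow]
  have h2 : ∏ m : Fin n, q⁻¹ ^ ((Finset.univ.filter
      (fun m' : Fin n => m' < m ∧ u m' < u m)).card) =
      q⁻¹ ^ ((Finset.univ.filter
        (fun p : Fin n × Fin n => p.1 < p.2 ∧ u p.1 < u p.2)).card) := by
    rw [Finset.prod_pow_eq_pow_sum, sum_cLt]
  rw [Finset.prod_congr rfl (fun m _ => hfac m), Finset.prod_mul_distrib, h2, prod_qL hv hu q]
  rw [← T_eq_D, T_split, zpow_neg, zpow_natCast, pow_add, mul_inv, inv_pow]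
  have h1 : q ^ (Finset.univ.filter
      (fun p : Fin n × Fin n => p.1 < p.2 ∧ u p.2 < u p.1)).card ≠ 0 :=
    pow_ne_zero _ hq0.ne'
  field_simp
end Alg2

section AlgMain
variable {q : ℝ} {n : ℕ} {u : Fin n → ℝ} {v : ℕ → ℝ}

lemma algebra_main (hq0 : 0 < q) (hv : Monotone v) (hu : ∀ m, u m ∈ Set.range v) :
    ∏ m : Fin n, (q ^ ({j : ℕ | v j < u m}.ncard -
        (Finset.univ.filter (fun m' : Fin n => m' < m ∧ u m' < u m)).card) *
      (1 - qpowE q ({j : ℕ | v j = u m}.encard -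
        ((Finset.univ.filter (fun m' : Fin n => m' < m ∧ u m' = u m)).card : ℕ∞)))) =
    q ^ ((Finset.univ.filter
        (fun p : Fin n × Fin n => p.1 < p.2 ∧ u p.2 < u p.1)).card) *
      q ^ (-((∑ p ∈ ((Finset.univ.image u) ×ˢ (Finset.univ.image u)).filter
          (fun p : ℝ × ℝ => p.1 < p.2),
          (Finset.univ.filter (fun m : Fin n => u m = p.1)).card *
            (Finset.univ.filter (fun m : Fin n => u m = p.2)).card : ℕ) : ℤ)) *
      ∏ a ∈ Finset.univ.image u,
        (∏ i ∈ Finset.range ((Finset.univ.filter (fun m : Fin n => u m = a)).card),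
            (1 - qpowE q {j : ℕ | v j = a}.encard * q⁻¹ ^ i)) *
          qpowE q (((Finset.univ.filter (fun m : Fin n => u m = a)).card : ℕ∞) *
            {j : ℕ | v j < a}.encard) := by
  classical
  rw [Finset.prod_mul_distrib, prod_B hq0 u v]
  by_cases hB : ∀ a ∈ Finset.univ.image u,
      (((Finset.univ.filter (fun m : Fin n => u m = a)).card : ℕ∞)) ≤ {j : ℕ | v j = a}.encard
  · rw [prod_A hq0 hv hu hB, Finset.prod_mul_distrib]
    ring
  · push_neg at hB
    obtain ⟨a, ha, hlt⟩ := hB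
    have hne : {j : ℕ | v j = a}.encard ≠ ⊤ := by
      intro h
      rw [h] at hlt
      exact absurd hlt (by simp)
    set L0 := ({j : ℕ | v j = a}.encard).toNat with hL0
    have hLe : {j : ℕ | v j = a}.encard = (L0 : ℕ∞) := (ENat.coe_toNat hne).symm
    have hL0lt : L0 < (Finset.univ.filter (fun m : Fin n => u m = a)).card := by
      rw [hLe] at hlt
      exact_mod_cast hlt
    have hinner : ∏ i ∈ Finset.range ((Finset.univ.filter (fun m : Fin n => u m = a)).card),
        (1 - qpowE q {j : ℕ | v j = a}.encard * q⁻¹ ^ i) = 0 := by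
      refine Finset.prod_eq_zero (Finset.mem_range.2 hL0lt) ?_
      rw [hLe, qpowE_coe, inv_pow, mul_inv_cancel₀ (pow_ne_zero _ hq0.ne')]
      ring
    rw [Finset.prod_eq_zero ha hinner, Finset.prod_eq_zero ha (by rw [hinner, zero_mul])]
    ring

lemma card_range_filter {n : ℕ} (i : Fin n) (Q : ℕ → Prop) (R : Fin n → Prop)
    [DecidablePred Q] [DecidablePred R]
    (h : ∀ m : Fin n, m < i → (Q (m : ℕ) ↔ R m)) :
    ((Finset.range (i : ℕ)).filter Q).card =
      (Finset.univ.filter (fun m' : Fin n => m' < i ∧ R m')).card := by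
  have himg : (Finset.univ.filter (fun m' : Fin n => m' < i ∧ R m')).image Fin.val =
      (Finset.range (i : ℕ)).filter Q := by
    ext j
    simp only [Finset.mem_image, Finset.mem_filter, Finset.mem_univ, true_and,
      Finset.mem_range]
    constructor
    · rintro ⟨m', ⟨hlt, hR⟩, rfl⟩
      exact ⟨hlt, (h m' hlt).2 hR⟩
    · rintro ⟨hj, hQ⟩
      have hjn : j < n := lt_trans hj i.isLt
      have hji : (⟨j, hjn⟩ : Fin n) < i := hj
      exact ⟨⟨j, hjn⟩, ⟨hji, (h ⟨j, hjn⟩ hji).1 hQ⟩, rfl⟩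
  rw [← himg, Finset.card_image_of_injective _ Fin.val_injective]
end AlgMain



/-- the cylinder probabilities of the law `P^{(v)}` of the infinite `q`-shuffle
of a weakly increasing word `v`.  For a word `u` with letters in the support of `v`,
`P^{(v)}(w_1 = u_1, …, w_n = u_n)
  = q^{inv u} q^{-Σ_{b<a} μ_b(u) μ_a(u)} ∏_a (q^{l_a}; q^{-1})_{μ_a(u)} q^{μ_a(u) Σ_{b<a} l_b}`,
where `l_a = #{j : v_j = a}` (so `Σ_{b<a} l_b = #{j : v_j < a}`), `μ_a(u) = #{m : u_m = a}`,
the product runs over the (distinct) letters of `u` (all other letters of the support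
contribute a factor 1), and `q^∞ = 0`, `(0; q^{-1})_k = 1`. -/
theorem stmt_13 (q : ℝ) (hq0 : 0 < q) (hq1 : q < 1)
    (Ω : Type*) [MeasurableSpace Ω] (P : Measure Ω) [IsProbabilityMeasure P]
    (ξ : ℕ → Ω → ℕ) (hmeas : ∀ j, Measurable (ξ j))
    (hindep : iIndepFun ξ P)
    (hgeom : ∀ j i : ℕ, P {ω | ξ j ω = i} = ENNReal.ofReal ((1 - q) * q ^ i))
    (v : ℕ → ℝ) (hv : Monotone v)
    (n : ℕ) (u : Fin n → ℝ) (hu : ∀ m : Fin n, u m ∈ Set.range v) :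
    (P.map (fun ω (j : ℕ) => v (shuffleSeq (fun t => ξ t ω) j)))
        {w : ℕ → ℝ | ∀ m : Fin n, w (m : ℕ) = u m} =
      ENNReal.ofReal
        (q ^ ((Finset.univ.filter
            (fun p : Fin n × Fin n => p.1 < p.2 ∧ u p.2 < u p.1)).card) *
          q ^ (-((∑ p ∈ ((Finset.univ.image u) ×ˢ (Finset.univ.image u)).filter
              (fun p : ℝ × ℝ => p.1 < p.2),
              (Finset.univ.filter (fun m : Fin n => u m = p.1)).card *
                (Finset.univ.filter (fun m : Fin n => u m = p.2)).card : ℕ) : ℤ)) *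
          ∏ a ∈ Finset.univ.image u,
            (∏ i ∈ Finset.range ((Finset.univ.filter (fun m : Fin n => u m = a)).card),
                (1 - qpowE q {j : ℕ | v j = a}.encard * q⁻¹ ^ i)) *
              qpowE q (((Finset.univ.filter (fun m : Fin n => u m = a)).card : ℕ∞) *
                {j : ℕ | v j < a}.encard)) := by
  classical
  set U : ℕ → ℝ := fun t => if h : t < n then u ⟨t, h⟩ else 0 with hU_def
  have hUi : ∀ i : Fin n, U (i : ℕ) = u i := by
    intro i
    simp [hU_def, i.isLt]
  have hU : ∀ m < n, U m ∈ Set.range v := by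
    intro m hm
    rw [show U m = u ⟨m, hm⟩ from dif_pos hm]
    exact hu _
  have hF : Measurable (fun ω (j : ℕ) => v (shuffleSeq (fun t => ξ t ω) j)) :=
    measurable_pi_lambda _ (fun j => G_measurable hmeas j)
  have hcyl : MeasurableSet {w : ℕ → ℝ | ∀ m : Fin n, w (m : ℕ) = u m} := by
    have : {w : ℕ → ℝ | ∀ m : Fin n, w (m : ℕ) = u m} =
        ⋂ m : Fin n, (fun w : ℕ → ℝ => w (m : ℕ)) ⁻¹' {u m} := by
      ext w; simp
    rw [this]
    exact MeasurableSet.iInter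
      (fun m => (measurable_pi_apply (m : ℕ)) (measurableSet_singleton _))
  rw [Measure.map_apply hF hcyl]
  have hpre : (fun ω (j : ℕ) => v (shuffleSeq (fun t => ξ t ω) j)) ⁻¹'
      {w : ℕ → ℝ | ∀ m : Fin n, w (m : ℕ) = u m} =
      {ω | ∀ m < n, v (shuffleSeq (fun t => ξ t ω) m) = U m} := by
    ext ω
    simp only [Set.mem_preimage, Set.mem_setOf_eq]
    constructor
    · intro h m hm
      rw [show U m = u ⟨m, hm⟩ from dif_pos hm]
      exact h ⟨m, hm⟩
    · intro h m
      rw [← hUi m]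
      exact h (m : ℕ) m.isLt
  rw [hpre, main_ind hq0 hq1 hmeas hindep hgeom hv U n hU,
    ← Fin.prod_univ_eq_prod_range (fun m => ENNReal.ofReal
      (q ^ ({j : ℕ | v j < U m}.ncard -
          ((Finset.range m).filter (fun m' => U m' < U m)).card) *
        (1 - qpowE q ({j : ℕ | v j = U m}.encard -
          (((Finset.range m).filter (fun m' => U m' = U m)).card : ℕ∞))))) n]
  have hfac : ∀ i : Fin n,
      (q ^ ({j : ℕ | v j < U (i : ℕ)}.ncard -
          ((Finset.range (i : ℕ)).filter (fun m' => U m' < U (i : ℕ))).card) *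
        (1 - qpowE q ({j : ℕ | v j = U (i : ℕ)}.encard -
          (((Finset.range (i : ℕ)).filter (fun m' => U m' = U (i : ℕ))).card : ℕ∞)))) =
      (q ^ ({j : ℕ | v j < u i}.ncard -
          (Finset.univ.filter (fun m' : Fin n => m' < i ∧ u m' < u i)).card) *
        (1 - qpowE q ({j : ℕ | v j = u i}.encard -
          ((Finset.univ.filter (fun m' : Fin n => m' < i ∧ u m' = u i)).card : ℕ∞)))) := by
    intro i
    rw [hUi i]
    have h1 : ((Finset.range (i : ℕ)).filter (fun m' => U m' < u i)).card =
        (Finset.univ.filter (fun m' : Fin n => m' < i ∧ u m' < u i)).card :=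
      card_range_filter i _ _ (fun m _ => by rw [hUi m])
    have h2 : ((Finset.range (i : ℕ)).filter (fun m' => U m' = u i)).card =
        (Finset.univ.filter (fun m' : Fin n => m' < i ∧ u m' = u i)).card :=
      card_range_filter i _ _ (fun m _ => by rw [hUi m])
    rw [h1, h2]
  rw [Finset.prod_congr rfl (fun i _ => congrArg ENNReal.ofReal (hfac i))]
  have hnn : ∀ i : Fin n, i ∈ Finset.univ → 0 ≤
      (q ^ ({j : ℕ | v j < u i}.ncard -
          (Finset.univ.filter (fun m' : Fin n => m' < i ∧ u m' < u i)).card) *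
        (1 - qpowE q ({j : ℕ | v j = u i}.encard -
          ((Finset.univ.filter (fun m' : Fin n => m' < i ∧ u m' = u i)).card : ℕ∞)))) := by
    intro i _
    exact mul_nonneg (pow_nonneg hq0.le _)
      (sub_nonneg.2 (qpowE_le_one hq0.le hq1.le _))
  rw [← ENNReal.ofReal_prod_of_nonneg hnn]
  exact congrArg ENNReal.ofReal (algebra_main hq0 hv hu)
end

section
/- Fix d ≥ 1, q > 0, and μ, λ ∈ ℕ^d with μ_a ≤ λ_a for every a; set m = μ_1 + ⋯ + μ_d and n = λ_1 + ⋯ + λ_d. For a word u ∈ {1, ..., d}^{n−m} in which each letter a occurs exactly λ_a − μ_a times, define its weight as ∏_{j=1}^{n−m} q^{Σ_{b > u_j} (μ_b + #{i < j : u_i = b})}. Then the sum of the weights over all such words equals q^{N(μ,λ)} · (q; q)_{n−m} / ∏_{a=1}^d (q; q)_{λ_a − μ_a}, where N(μ, λ) = Σ_{1 ≤ b < a ≤ d} λ_b μ_a − Σ_{1 ≤ b < a ≤ d} μ_b μ_a and (q; q)_k = ∏_{i=1}^k (1 − q^i). In particular, for μ = 0 this gives MacMahon's formula: the sum of q^{inv(u)}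 over all words u of length n with exactly λ_a occurrences of each letter a equals the Gaussian multinomial coefficient (q; q)_n / ∏_{a=1}^d (q; q)_{λ_a}, where inv(u) = #{(i, j) : i < j, u_i > u_j}. -/
open Finset

/-- The `q`-Pochhammer symbol `(q; q)_k = ∏_{i=1}^k (1 - q^i)`. -/
def qPoch (q : ℝ) (k : ℕ) : ℝ := ∏ i ∈ Finset.range k, (1 - q ^ (i + 1))

lemma qPoch_succ (q : ℝ) (k : ℕ) : qPoch q (k+1) = qPoch q k * (1 - q ^ (k+1)) :=
  Finset.prod_range_succ _ _

namespace Stmt14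
variable {d : ℕ} (q : ℝ) (μ : Fin d → ℕ)

/-- The weight of a word. -/
def wt (n : ℕ) (u : Fin n → Fin d) : ℝ :=
  ∏ j, q ^ (∑ b ∈ Finset.univ.filter (fun b => u j < b),
      (μ b + (Finset.univ.filter (fun i => i < j ∧ u i = b)).card))

/-- Words with prescribed letter multiplicities. -/
def A (n : ℕ) (c : Fin d → ℕ) : Finset (Fin n → Fin d) :=
  Finset.univ.filter (fun u => ∀ a, (Finset.univ.filter (fun j => u j = a)).card = c a)

/-- The weighted sum over words with multiplicities `c`. -/
def W (n : ℕ) (c : Fin d → ℕ) : ℝ := ∑ u ∈ A n c, wt q μ n u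

lemma count_sum (n : ℕ) (u : Fin n → Fin d) :
    ∑ a, (Finset.univ.filter (fun j => u j = a)).card = n := by
  rw [← Finset.card_eq_sum_card_fiberwise (fun x _ => Finset.mem_univ (u x))]
  simp

lemma W_eq_zero {n : ℕ} {c : Fin d → ℕ} (h : ∑ a, c a ≠ n) : W q μ n c = 0 := by
  apply Finset.sum_eq_zero
  intro u hu
  rw [A, Finset.mem_filter] at hu
  exact absurd ((Finset.sum_congr rfl (fun a _ => hu.2 a)).symm.trans (count_sum n u)) h

lemma count_snoc (n : ℕ) (v : Fin n → Fin d) (a b : Fin d) :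
    ((Finset.univ.filter (fun j : Fin (n+1) =>
        (Fin.snoc v a : Fin (n+1) → Fin d) j = b)).card : ℕ)
      = (Finset.univ.filter (fun j => v j = b)).card + (if a = b then 1 else 0) := by
  simp only [Finset.card_filter]
  rw [Fin.sum_univ_castSucc]
  simp [Fin.snoc_castSucc, Fin.snoc_last]

lemma inner_snoc (n : ℕ) (v : Fin n → Fin d) (a b : Fin d) (j : Fin n) :
    (Finset.univ.filter (fun i : Fin (n+1) =>
        i < j.castSucc ∧ (Fin.snoc v a : Fin (n+1) → Fin d) i = b)).card
      = (Finset.univ.filter (fun i => i < j ∧ v i = b)).card := by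
  simp only [Finset.card_filter]
  rw [Fin.sum_univ_castSucc]
  simp [Fin.snoc_castSucc, Fin.snoc_last, Fin.castSucc_lt_castSucc_iff,
    (Fin.castSucc_lt_last j).asymm]

lemma inner_snoc_last (n : ℕ) (v : Fin n → Fin d) (a b : Fin d) :
    (Finset.univ.filter (fun i : Fin (n+1) =>
        i < Fin.last n ∧ (Fin.snoc v a : Fin (n+1) → Fin d) i = b)).card
      = (Finset.univ.filter (fun i => v i = b)).card := by
  simp only [Finset.card_filter]
  rw [Fin.sum_univ_castSucc]
  simp [Fin.snoc_castSucc, Fin.snoc_last, Fin.castSucc_lt_last]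

lemma wt_snoc (n : ℕ) (v : Fin n → Fin d) (a : Fin d) :
    wt q μ (n+1) (Fin.snoc v a)
      = wt q μ n v * q ^ (∑ b ∈ Finset.univ.filter (fun b => a < b),
          (μ b + (Finset.univ.filter (fun i => v i = b)).card)) := by
  rw [wt, Fin.prod_univ_castSucc]
  congr 1
  · apply Finset.prod_congr rfl
    intro j _
    rw [Fin.snoc_castSucc]
    congr 1
    apply Finset.sum_congr rfl
    intro b _
    rw [inner_snoc]
  · rw [Fin.snoc_last]
    congr 1
    apply Finset.sum_congr rfl
    intro b _
    rw [inner_snoc_last]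

lemma W_step (n : ℕ) (c : Fin d → ℕ) (hc : ∑ a, c a = n + 1) :
    W q μ (n+1) c = ∑ a, q ^ (∑ b ∈ Finset.univ.filter (fun b => a < b), (μ b + c b))
        * W q μ n (fun b => c b - if b = a then 1 else 0) := by
  rw [W, ← Finset.sum_fiberwise (A (n+1) c) (fun u => u (Fin.last n)) (wt q μ (n+1))]
  apply Finset.sum_congr rfl
  intro a _
  set c' : Fin d → ℕ := fun b => c b - if b = a then 1 else 0 with hc'
  rw [W, Finset.mul_sum]
  -- counts of `Fin.init u` for members of the fiber
  have hmem : ∀ u ∈ (A (n+1) c).filter (fun u => u (Fin.last n) = a),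
      (∀ b, (Finset.univ.filter (fun j => Fin.init u j = b)).card = c' b)
        ∧ u (Fin.last n) = a := by
    intro u hu
    rw [Finset.mem_filter] at hu
    obtain ⟨hu1, hu2⟩ := hu
    rw [A, Finset.mem_filter] at hu1
    refine ⟨fun b => ?_, hu2⟩
    have h := count_snoc n (Fin.init u) (u (Fin.last n)) b
    rw [Fin.snoc_init_self, hu1.2 b, hu2] at h
    simp only [hc']
    rcases eq_or_ne a b with hba | hba
    · subst hba
      rw [if_pos rfl] at h
      rw [if_pos rfl]
      omega
    · rw [if_neg hba] at h
      rw [if_neg (fun hh => hba hh.symm)]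
      omega
  -- members of `A n c'` force `c a ≥ 1`
  have hpos : ∀ v ∈ A n c', 1 ≤ c a := by
    intro v hv
    rw [A, Finset.mem_filter] at hv
    by_contra hca
    have h0 : c a = 0 := by omega
    have h1 : ∑ b, c' b = n := by
      rw [← count_sum n v]; exact Finset.sum_congr rfl (fun b _ => (hv.2 b).symm)
    have h2 : ∑ b, c' b = n + 1 := by
      rw [← hc]
      apply Finset.sum_congr rfl
      intro b _
      by_cases hba : b = a <;> simp [hc', hba, h0]
    omega
  refine Finset.sum_nbij' (fun u => Fin.init u) (fun v => Fin.snoc v a) ?_ ?_ ?_ ?_ ?_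
  · intro u hu
    rw [A, Finset.mem_filter]
    exact ⟨Finset.mem_univ _, (hmem u hu).1⟩
  · intro v hv
    have hca := hpos v hv
    rw [A, Finset.mem_filter] at hv
    rw [Finset.mem_filter, A, Finset.mem_filter]
    refine ⟨⟨Finset.mem_univ _, fun b => ?_⟩, by simp [Fin.snoc_last]⟩
    rw [count_snoc n v a b, hv.2 b]
    by_cases hba : b = a <;> simp [hc', hba] <;> omega
  · intro u hu
    rw [Finset.mem_filter] at hu
    show Fin.snoc (Fin.init u) a = u
    rw [← hu.2]
    exact Fin.snoc_init_self u
  · intro v _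
    show Fin.init (Fin.snoc v a : Fin (n+1) → Fin d) = v
    simp
  · intro u hu
    have h2 := (hmem u hu).2
    conv_lhs => rw [← Fin.snoc_init_self u]
    rw [h2, wt_snoc]
    rw [mul_comm]
    congr 2
    apply Finset.sum_congr rfl
    intro b hb
    rw [Finset.mem_filter] at hb
    rw [(hmem u hu).1 b]
    have hba : ¬ b = a := fun h => by rw [h] at hb; exact lt_irrefl a hb.2
    simp [hc', hba]

lemma main : ∀ (n : ℕ) (c : Fin d → ℕ), (∑ a, c a = n) →
    (∏ a, qPoch q (c a)) * W q μ n c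
      = q ^ (∑ a, ∑ b ∈ Finset.univ.filter (fun b => a < b), c a * μ b) * qPoch q n := by
  intro n
  induction n with
  | zero =>
    intro c h0
    have hc0 : ∀ a, c a = 0 := by
      intro a
      exact (Finset.sum_eq_zero_iff.mp h0) a (Finset.mem_univ a)
    have hA : A (d := d) 0 c = Finset.univ := by
      rw [A, Finset.filter_true_of_mem]
      intro u _ a
      rw [hc0 a]
      simp
    rw [W, hA]
    have hwt : ∀ u : Fin 0 → Fin d, wt q μ 0 u = 1 := by
      intro u; rw [wt]; exact Finset.prod_of_isEmpty _
    simp [hwt, hc0, qPoch]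
  | succ n IH =>
    intro c hc
    rw [W_step q μ n c hc, Finset.mul_sum]
    set t : ℕ → ℕ := fun i => ∑ b ∈ Finset.univ.filter (fun b : Fin d => i ≤ (b : ℕ)), c b with ht
    have hT3 : ∀ a : Fin d, t (a : ℕ) = t ((a : ℕ) + 1) + c a := by
      intro a
      have hset : Finset.univ.filter (fun b : Fin d => (a : ℕ) ≤ (b : ℕ))
          = insert a (Finset.univ.filter (fun b : Fin d => (a : ℕ) + 1 ≤ (b : ℕ))) := by
        ext b
        simp only [Finset.mem_filter, Finset.mem_univ, true_and, Finset.mem_insert, Fin.ext_iff]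
        omega
      rw [ht]
      simp only
      rw [hset, Finset.sum_insert (by simp)]
      omega
    have hTd : t d = 0 := by
      rw [ht]; simp only
      rw [Finset.filter_false_of_mem (fun b _ => not_le.mpr b.isLt), Finset.sum_empty]
    have hT0 : t 0 = n + 1 := by
      rw [ht]; simp only
      rw [Finset.filter_true_of_mem (fun b _ => Nat.zero_le _)]
      exact hc
    have key : ∀ a : Fin d,
        (∏ b, qPoch q (c b)) * ((q ^ (∑ b ∈ Finset.univ.filter (fun b => a < b), (μ b + c b)))
            * W q μ n (fun b => c b - if b = a then 1 else 0))
          = q ^ (∑ x, ∑ b ∈ Finset.univ.filter (fun b => x < b), c x * μ b)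
              * ((q ^ t ((a:ℕ)+1) - q ^ t (a:ℕ)) * qPoch q n) := by
      intro a
      rcases Nat.eq_zero_or_pos (c a) with hca | hca
      · have hc'c : (fun b => c b - if b = a then 1 else 0) = c := by
          funext b
          rcases eq_or_ne b a with rfl | hba
          · simp [hca]
          · simp [hba]
        rw [hc'c, W_eq_zero q μ (by omega : ∑ a, c a ≠ n), hT3 a, hca]
        simp
      · obtain ⟨m, hm⟩ : ∃ m, c a = m + 1 := ⟨c a - 1, by omega⟩
        set c' : Fin d → ℕ := fun b => c b - if b = a then 1 else 0 with hc'
        have hc'a : c' a = m := by simp [hc', hm]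
        have hc'b : ∀ b, b ≠ a → c' b = c b := fun b hb => by simp [hc', hb]
        have hsum' : ∑ b, c' b = n := by
          have h2 : ∑ b, c' b + ∑ b, (if b = a then 1 else 0) = ∑ b, c b := by
            rw [← Finset.sum_add_distrib]
            apply Finset.sum_congr rfl
            intro b _
            rcases eq_or_ne b a with rfl | hb
            · simp [hc', hm]
            · simp [hc', hb]
          rw [Finset.sum_ite_eq' Finset.univ a (fun _ => 1)] at h2
          simp only [Finset.mem_univ, if_true] at h2
          omega
        have hprod : (∏ b, qPoch q (c b)) = (1 - q ^ (c a)) * ∏ b, qPoch q (c' b) := by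
          rw [← Finset.mul_prod_erase Finset.univ (fun b => qPoch q (c b)) (Finset.mem_univ a),
              ← Finset.mul_prod_erase Finset.univ (fun b => qPoch q (c' b)) (Finset.mem_univ a)]
          rw [Finset.prod_congr rfl (fun b hb =>
            show qPoch q (c b) = qPoch q (c' b) by rw [hc'b b (Finset.ne_of_mem_erase hb)])]
          rw [hc'a, hm, qPoch_succ]
          ring
        have hE' : (∑ x, ∑ b ∈ Finset.univ.filter (fun b => x < b), c x * μ b)
            = (∑ x, ∑ b ∈ Finset.univ.filter (fun b => x < b), c' x * μ b)
                + (∑ b ∈ Finset.univ.filter (fun b => a < b), μ b) := by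
          have expand : ∀ (f : Fin d → ℕ),
              ∑ x, ∑ b ∈ Finset.univ.filter (fun b => x < b), f x * μ b
                = ∑ x, f x * ∑ b ∈ Finset.univ.filter (fun b => x < b), μ b :=
            fun f => Finset.sum_congr rfl (fun x _ => (Finset.mul_sum _ _ _).symm)
          rw [expand, expand]
          set M : Fin d → ℕ := fun x => ∑ b ∈ Finset.univ.filter (fun b => x < b), μ b with hM
          have hterm : ∀ x, c x * M x = c' x * M x + (if x = a then M a else 0) := by
            intro x
            rcases eq_or_ne x a with rfl | hx
            · rw [if_pos rfl, hc'a, hm, Nat.succ_mul]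
            · simp [hc'b x hx, hx]
          rw [Finset.sum_congr rfl (fun x _ => hterm x), Finset.sum_add_distrib,
            Finset.sum_ite_eq' Finset.univ a (fun _ => M a)]
          simp [hM]
        have hexp : ∑ b ∈ Finset.univ.filter (fun b => a < b), (μ b + c b)
            = (∑ b ∈ Finset.univ.filter (fun b => a < b), μ b) + t ((a:ℕ)+1) := by
          rw [Finset.sum_add_distrib]
          congr 1
        have hIH := IH c' hsum'
        rw [hprod, hexp, hE', hT3 a, hm]
        rw [pow_add, pow_add, pow_add]
        linear_combination ((1 - q ^ (m+1))
          * q ^ (∑ b ∈ Finset.univ.filter (fun b => a < b), μ b) * q ^ (t ((a:ℕ)+1))) * hIH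
    rw [Finset.sum_congr rfl (fun a _ => key a)]
    rw [← Finset.mul_sum, ← Finset.sum_mul]
    have htel : ∑ a : Fin d, (q ^ t ((a:ℕ)+1) - q ^ t (a:ℕ)) = 1 - q ^ (n+1) := by
      rw [Fin.sum_univ_eq_sum_range (fun i => q ^ t (i+1) - q ^ t i) d]
      rw [Finset.sum_range_sub (fun i => q ^ t i) d]
      rw [hTd, hT0, pow_zero]
    rw [htel, qPoch_succ]
    ring

lemma pairconv (f g : Fin d → ℕ) :
    ∑ p ∈ Finset.univ.filter (fun p : Fin d × Fin d => p.1 < p.2), f p.1 * g p.2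
      = ∑ a, ∑ b ∈ Finset.univ.filter (fun b => a < b), f a * g b := by
  rw [Finset.sum_filter, Fintype.sum_prod_type]
  exact Finset.sum_congr rfl (fun a _ => (Finset.sum_filter _ _).symm)

lemma wt_zero (q : ℝ) (n : ℕ) (u : Fin n → Fin d) :
    wt q (fun _ => 0) n u
      = q ^ ((Finset.univ.filter
          (fun p : Fin n × Fin n => p.1 < p.2 ∧ u p.2 < u p.1)).card) := by
  rw [wt, Finset.prod_pow_eq_pow_sum]
  congr 1
  rw [Finset.card_filter, Fintype.sum_prod_type, Finset.sum_comm]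
  apply Finset.sum_congr rfl
  intro j _
  simp only [zero_add, Finset.card_filter]
  rw [Finset.sum_comm]
  apply Finset.sum_congr rfl
  intro i _
  by_cases hij : i < j
  · simp only [hij, true_and]
    rw [Finset.sum_ite_eq (Finset.univ.filter (fun b => u j < b)) (u i) (fun _ => 1)]
    simp [Finset.mem_filter]
  · simp [hij]

end Stmt14

theorem stmt_14 (q : ℝ) (hq : 0 < q) (d : ℕ) (hd : 1 ≤ d)
    (μ lam : Fin d → ℕ) (hle : ∀ a, μ a ≤ lam a) :
    ((∏ a, qPoch q (lam a - μ a)) *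
        ∑ u ∈ Finset.univ.filter
          (fun u : Fin ((∑ a, lam a) - (∑ a, μ a)) → Fin d =>
            ∀ a, (Finset.univ.filter (fun j => u j = a)).card = lam a - μ a),
          ∏ j, q ^ (∑ b ∈ Finset.univ.filter (fun b => u j < b),
            (μ b + (Finset.univ.filter (fun i => i < j ∧ u i = b)).card)) =
      q ^ (((∑ p ∈ Finset.univ.filter (fun p : Fin d × Fin d => p.1 < p.2),
              lam p.1 * μ p.2 : ℕ) : ℤ) -
            ((∑ p ∈ Finset.univ.filter (fun p : Fin d × Fin d => p.1 < p.2),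
              μ p.1 * μ p.2 : ℕ) : ℤ)) *
        qPoch q ((∑ a, lam a) - (∑ a, μ a))) ∧
    ((∏ a, qPoch q (lam a)) *
        ∑ u ∈ Finset.univ.filter
          (fun u : Fin (∑ a, lam a) → Fin d =>
            ∀ a, (Finset.univ.filter (fun j => u j = a)).card = lam a),
          q ^ ((Finset.univ.filter
            (fun p : Fin (∑ a, lam a) × Fin (∑ a, lam a) =>
              p.1 < p.2 ∧ u p.2 < u p.1)).card) =
      qPoch q (∑ a, lam a)) := by
  constructor
  · -- the general statement
    have hsumc : ∑ a, (lam a - μ a) = (∑ a, lam a) - (∑ a, μ a) :=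
      Finset.sum_tsub_distrib Finset.univ (fun a _ => hle a)
    have h := Stmt14.main q μ ((∑ a, lam a) - (∑ a, μ a)) (fun a => lam a - μ a) hsumc
    have hLHS : (∏ a, qPoch q (lam a - μ a)) *
        (∑ u ∈ Finset.univ.filter
          (fun u : Fin ((∑ a, lam a) - (∑ a, μ a)) → Fin d =>
            ∀ a, (Finset.univ.filter (fun j => u j = a)).card = lam a - μ a),
          ∏ j, q ^ (∑ b ∈ Finset.univ.filter (fun b => u j < b),
            (μ b + (Finset.univ.filter (fun i => i < j ∧ u i = b)).card)))
        = (∏ a, qPoch q (lam a - μ a)) *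
            Stmt14.W q μ ((∑ a, lam a) - (∑ a, μ a)) (fun a => lam a - μ a) := rfl
    rw [hLHS, h]
    congr 1
    -- exponent bookkeeping
    have hA : (∑ p ∈ Finset.univ.filter (fun p : Fin d × Fin d => p.1 < p.2),
          lam p.1 * μ p.2)
        = (∑ a, ∑ b ∈ Finset.univ.filter (fun b => a < b), (lam a - μ a) * μ b)
            + (∑ p ∈ Finset.univ.filter (fun p : Fin d × Fin d => p.1 < p.2),
                μ p.1 * μ p.2) := by
      rw [Stmt14.pairconv lam μ, Stmt14.pairconv μ μ, ← Finset.sum_add_distrib]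
      apply Finset.sum_congr rfl
      intro a _
      rw [← Finset.sum_add_distrib]
      apply Finset.sum_congr rfl
      intro b _
      conv_lhs => rw [← Nat.sub_add_cancel (hle a)]
      rw [add_mul]
    rw [hA]
    push_cast
    rw [add_sub_cancel_right]
    rw [← zpow_natCast q]
    norm_num
  · -- MacMahon's formula
    have h := Stmt14.main q (fun _ => 0) (∑ a, lam a) lam rfl
    simp only [mul_zero, Finset.sum_const_zero, pow_zero, one_mul] at h
    rw [← h]
    congr 1
    rw [Stmt14.W]
    exact Finset.sum_congr rfl (fun u _ => (Stmt14.wt_zero q (∑ a, lam a) u).symm)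
end

section
/- Let σ be the random bijection of ℕ driving the infinite q-shuffle. Fix k ≥ 1, subsets I, J ⊆ {1, ..., k} with |I| = |J| = r, and a bijection π : J → I, and set inv(π) = #{(j_1, j_2) : j_1, j_2 ∈ J, j_1 < j_2, π(j_1) > π(j_2)}. Then the probability that, for every j ∈ {1, ..., k}, one has σ(j) ≤ k if and only if j ∈ J, and σ(j) = π(j) for every j ∈ J, equals (1 − q)^r · q^{k² − 2kr − r + inv(π) + Σ_{i∈I} i + Σ_{j∈J} j}. -/
open MeasureTheory ProbabilityTheory

namespace Stmt17Aux

lemma infinite_notMem (l : List ℕ) : {m : ℕ | ¬ m ∈ l}.Infinite := by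
  have h : {m : ℕ | m ∈ l}.Finite := l.finite_toSet
  simpa [Set.compl_def] using h.infinite_compl

lemma mem_shufflePrefix_iff (x : ℕ → ℕ) (n m : ℕ) :
    m ∈ shufflePrefix x n ↔ ∃ i, i < n ∧ shuffleSeq x i = m := by
  induction n with
  | zero => simp [shufflePrefix]
  | succ n ih =>
    simp only [shufflePrefix, List.mem_append, List.mem_singleton, ih]
    constructor
    · rintro (⟨i, hi, h⟩ | h)
      · exact ⟨i, Nat.lt_succ_of_lt hi, h⟩
      · exact ⟨n, Nat.lt_succ_self n, h.symm⟩
    · rintro ⟨i, hi, h⟩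
      rcases Nat.lt_succ_iff_lt_or_eq.1 hi with h' | rfl
      · exact Or.inl ⟨i, h', h⟩
      · exact Or.inr h.symm

section Comb

variable {k : ℕ} (J : Finset (Fin k)) (π : Fin k → Fin k)

/-- number of earlier positions in `J` whose value is below `π j` -/
def cA (j : Fin k) : ℕ := (J.filter fun j' : Fin k => j' < j ∧ π j' < π j).card

/-- the forced geometric value at a position `j ∈ J` -/
def cVal (j : Fin k) : ℕ := (π j : ℕ) - cA J π j

/-- number of positions in `J` before `n` -/
def cnt (n : ℕ) : ℕ := (J.filter fun j' : Fin k => (j' : ℕ) < n).card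

/-- the threshold for the geometric value at a position `j ∉ J` -/
def mVal (j : Fin k) : ℕ := k - cnt J (j : ℕ)

variable {J π} {x : ℕ → ℕ}

/-- the event conditions below `n` pin down the part of the prefix lying below `k`. -/
lemma lowSpec {n : ℕ} (hn : n ≤ k)
    (h : ∀ j : Fin k, (j : ℕ) < n →
      ((shuffleSeq x (j : ℕ) < k ↔ j ∈ J) ∧ (j ∈ J → shuffleSeq x (j : ℕ) = (π j : ℕ)))) :
    ∀ m, m < k → (m ∈ shufflePrefix x n ↔ ∃ j, j ∈ J ∧ (j : ℕ) < n ∧ (π j : ℕ) = m) := by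
  intro m hm
  rw [mem_shufflePrefix_iff]
  constructor
  · rintro ⟨i, hi, hσ⟩
    have hik : i < k := lt_of_lt_of_le hi hn
    set j : Fin k := ⟨i, hik⟩ with hj
    have hcond := h j hi
    have hlt : shuffleSeq x (j : ℕ) < k := by simpa [hj, hσ] using hm
    have hjJ : j ∈ J := hcond.1.1 hlt
    exact ⟨j, hjJ, hi, by simpa [hj, hσ] using (hcond.2 hjJ).symm⟩
  · rintro ⟨j, hjJ, hjn, hπ⟩
    exact ⟨(j : ℕ), hjn, by rw [(h j hjn).2 hjJ, hπ]⟩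

lemma count_notMem (hinj : Set.InjOn π ↑J) {n : ℕ} (hn : n ≤ k)
    (h : ∀ m, m < k → (m ∈ shufflePrefix x n ↔ ∃ j, j ∈ J ∧ (j : ℕ) < n ∧ (π j : ℕ) = m))
    {v : ℕ} (hv : v ≤ k) :
    Nat.count (fun m => m ∉ shufflePrefix x n) v
      = v - (J.filter fun j' : Fin k => (j' : ℕ) < n ∧ (π j' : ℕ) < v).card ∧
    (J.filter fun j' : Fin k => (j' : ℕ) < n ∧ (π j' : ℕ) < v).card ≤ v := by
  classical
  have himg : (Finset.range v).filter (fun m => m ∈ shufflePrefix x n)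
      = (J.filter fun j' : Fin k => (j' : ℕ) < n ∧ (π j' : ℕ) < v).image (fun j' => (π j' : ℕ)) := by
    ext m
    simp only [Finset.mem_filter, Finset.mem_range, Finset.mem_image]
    constructor
    · rintro ⟨hmv, hmem⟩
      obtain ⟨j, hjJ, hjn, hπ⟩ := (h m (lt_of_lt_of_le hmv hv)).1 hmem
      exact ⟨j, ⟨hjJ, hjn, by omega⟩, hπ⟩
    · rintro ⟨j, ⟨hjJ, hjn, hπv⟩, rfl⟩
      exact ⟨hπv, (h _ (lt_of_lt_of_le hπv hv)).2 ⟨j, hjJ, hjn, rfl⟩⟩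
  have hcard : ((Finset.range v).filter (fun m => m ∈ shufflePrefix x n)).card
      = (J.filter fun j' : Fin k => (j' : ℕ) < n ∧ (π j' : ℕ) < v).card := by
    rw [himg, Finset.card_image_of_injOn]
    intro a ha b hb hab
    have ha' := Finset.mem_filter.1 ha
    have hb' := Finset.mem_filter.1 hb
    exact hinj ha'.1 hb'.1 (Fin.val_injective hab)
  have hsplit := Finset.card_filter_add_card_filter_not
    (s := Finset.range v) (p := fun m => m ∈ shufflePrefix x n)
  rw [Finset.card_range] at hsplit
  have hle : (J.filter fun j' : Fin k => (j' : ℕ) < n ∧ (π j' : ℕ) < v).card ≤ v := by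
    rw [← hcard]
    exact le_trans (Finset.card_filter_le _ _) (by simp)
  constructor
  · rw [Nat.count_eq_card_filter_range]
    have : ((Finset.range v).filter (fun m => ¬ m ∈ shufflePrefix x n)).card
        = v - ((Finset.range v).filter (fun m => m ∈ shufflePrefix x n)).card := by omega
    rw [this, hcard]
  · exact hle


lemma step_lemma (hinj : Set.InjOn π ↑J) {n : ℕ} (hn : n < k)
    (h : ∀ j : Fin k, (j : ℕ) < n →
      ((shuffleSeq x (j : ℕ) < k ↔ j ∈ J) ∧ (j ∈ J → shuffleSeq x (j : ℕ) = (π j : ℕ)))) :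
    (shuffleSeq x n < k ↔ x n < k - cnt J n) ∧
    (∀ jn : Fin k, (jn : ℕ) = n → jn ∈ J →
      (shuffleSeq x n = (π jn : ℕ) ↔ x n = cVal J π jn)) := by
  classical
  set p : ℕ → Prop := fun m => m ∉ shufflePrefix x n with hp
  have hpinf : (setOf p).Infinite := infinite_notMem _
  have hlow := lowSpec (le_of_lt hn) h
  constructor
  · -- σ(n) < k ↔ x n < k - cnt
    have hcount := count_notMem hinj (x := x) (le_of_lt hn) hlow (v := k) le_rfl
    have hfilter : (J.filter fun j' : Fin k => (j' : ℕ) < n ∧ (π j' : ℕ) < k)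
        = J.filter fun j' : Fin k => (j' : ℕ) < n := by
      apply Finset.filter_congr
      intro j' _
      simp [(π j').isLt]
    have hcnt : Nat.count p k = k - cnt J n := by
      rw [hcount.1, hfilter]; rfl
    rw [shuffleSeq, ← hcnt]
    exact (Nat.lt_nth_iff_count_lt hpinf).symm
  · intro jn hjn hjnJ
    have hπk : (π jn : ℕ) < k := (π jn).isLt
    have hpv : p (π jn : ℕ) := by
      intro hmem
      obtain ⟨j, hjJ, hjlt, hπ⟩ := (hlow _ hπk).1 hmem
      have : j = jn := hinj hjJ hjnJ (Fin.val_injective hπ)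
      omega
    have hcount := count_notMem hinj (x := x) (le_of_lt hn) hlow
      (v := (π jn : ℕ)) (le_of_lt hπk)
    have hfilter : (J.filter fun j' : Fin k => (j' : ℕ) < n ∧ (π j' : ℕ) < (π jn : ℕ))
        = J.filter fun j' : Fin k => j' < jn ∧ π j' < π jn := by
      apply Finset.filter_congr
      intro j' _
      simp only [Fin.lt_def, hjn]
    have hcv : Nat.count p (π jn : ℕ) = cVal J π jn := by
      rw [hcount.1, hfilter]; rfl
    constructor
    · intro hσ
      have := Nat.count_nth_of_infinite hpinf (x n)
      rw [shuffleSeq] at hσ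
      rw [← hcv, ← hσ, this]
    · intro hx
      rw [shuffleSeq, hx, ← hcv]
      exact Nat.nth_count hpv

/-- The key pointwise equivalence: the event on `σ` holds iff each geometric coordinate
satisfies its own condition. -/
lemma key (hinj : Set.InjOn π ↑J) (x : ℕ → ℕ) :
    (∀ j : Fin k, (shuffleSeq x (j : ℕ) < k ↔ j ∈ J) ∧
        (j ∈ J → shuffleSeq x (j : ℕ) = (π j : ℕ)))
    ↔ ∀ j : Fin k, (j ∈ J → x (j : ℕ) = cVal J π j) ∧ (j ∉ J → mVal J j ≤ x (j : ℕ)) := by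
  constructor
  · intro hE j
    have hstep := step_lemma hinj (x := x) j.isLt (fun j' hj' => hE j')
    constructor
    · intro hjJ
      exact (hstep.2 j rfl hjJ).1 ((hE j).2 hjJ)
    · intro hjJ
      have : ¬ shuffleSeq x (j : ℕ) < k := fun hc => hjJ ((hE j).1.1 hc)
      have := (not_iff_not.2 hstep.1).1 this
      simpa [mVal, not_lt] using this
  · intro hC
    have H : ∀ n, ∀ j : Fin k, (j : ℕ) < n →
        ((shuffleSeq x (j : ℕ) < k ↔ j ∈ J) ∧ (j ∈ J → shuffleSeq x (j : ℕ) = (π j : ℕ))) := by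
      intro n
      induction n with
      | zero => intro j hj; omega
      | succ n ih =>
        intro j hj
        rcases Nat.lt_succ_iff_lt_or_eq.1 hj with hj' | hj'
        · exact ih j hj'
        · subst hj'
          have hstep := step_lemma hinj (x := x) j.isLt ih
          by_cases hjJ : j ∈ J
          · have hx := (hC j).1 hjJ
            have hσ : shuffleSeq x (j : ℕ) = (π j : ℕ) := (hstep.2 j rfl hjJ).2 hx
            exact ⟨by simp [hσ, (π j).isLt, hjJ], fun _ => hσ⟩
          · have hx := (hC j).2 hjJ
            have : ¬ shuffleSeq x (j : ℕ) < k := by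
              rw [hstep.1]
              simpa [mVal, not_lt] using hx
            exact ⟨by simp [this, hjJ], fun h' => absurd h' hjJ⟩
    exact fun j => H k j j.isLt


end Comb

lemma card_filter_product {α : Type*} (s t : Finset α) (g : α → α → Prop)
    [∀ a b, Decidable (g a b)] :
    ((s ×ˢ t).filter fun p => g p.1 p.2).card = ∑ a ∈ s, (t.filter fun b => g a b).card := by
  rw [Finset.card_filter, Finset.sum_product]
  exact Finset.sum_congr rfl fun a _ => (Finset.card_filter _ _).symm

lemma exponent_eq {k : ℕ} {r : ℕ} (π : Fin k → Fin k) (I J : Finset (Fin k))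
    (hI : I.card = r) (hJ : J.card = r)
    (hinj : Set.InjOn π ↑J) (himg : J.image π = I) :
    (k : ℤ) ^ 2 - 2 * (k : ℤ) * (r : ℤ) - (r : ℤ) +
        (((J ×ˢ J).filter (fun p : Fin k × Fin k => p.1 < p.2 ∧ π p.2 < π p.1)).card : ℤ) +
        (∑ i ∈ I, ((i : ℤ) + 1)) + (∑ j ∈ J, ((j : ℤ) + 1))
      = ((∑ j ∈ J, cVal J π j + ∑ j ∈ Jᶜ, mVal J j : ℕ) : ℤ) := by
  classical
  set T : Finset (Fin k × Fin k) := (J ×ˢ J).filter fun p => p.2 < p.1 with hT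
  set Tp : Finset (Fin k × Fin k) := (J ×ˢ J).filter fun p => p.2 < p.1 ∧ π p.2 < π p.1 with hTp
  set Tm : Finset (Fin k × Fin k) := (J ×ˢ J).filter fun p => p.2 < p.1 ∧ π p.1 < π p.2 with hTm
  set Inv : Finset (Fin k × Fin k) :=
    (J ×ˢ J).filter fun p => p.1 < p.2 ∧ π p.2 < π p.1 with hInv
  have hrk : r ≤ k := by
    rw [← hJ]; simpa using Finset.card_le_univ J
  -- per-term bounds
  have hA_le : ∀ j : Fin k, cA J π j ≤ (π j : ℕ) := by
    intro j
    have h1 : cA J π j ≤ (Finset.Iio (π j)).card := by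
      apply Finset.card_le_card_of_injOn π
      · intro a ha
        exact Finset.mem_Iio.2 (Finset.mem_filter.1 ha).2.2
      · intro a ha b hb hab
        exact hinj (Finset.mem_filter.1 (Finset.mem_coe.1 ha)).1
          (Finset.mem_filter.1 (Finset.mem_coe.1 hb)).1 hab
    simpa [Fin.card_Iio] using h1
  have hcnt_le : ∀ n : ℕ, cnt J n ≤ k := by
    intro n
    refine le_trans (Finset.card_le_card (Finset.filter_subset _ _)) ?_
    rw [hJ]; exact hrk
  -- sums of cA and cnt as cardinalities of pair sets
  have hcA_sum : ∑ j ∈ J, cA J π j = Tp.card := by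
    rw [hTp, card_filter_product J J (fun a b => b < a ∧ π b < π a)]; rfl
  have hcnt_eq : ∀ j : Fin k, cnt J (j : ℕ) = (J.filter fun j' => j' < j).card := by
    intro j
    unfold cnt
    congr 1
  have hcnt_sumJ : ∑ j ∈ J, cnt J (j : ℕ) = T.card := by
    rw [hT, card_filter_product J J (fun a b => b < a)]
    exact Finset.sum_congr rfl fun j _ => hcnt_eq j
  have hcnt_sumU : ∑ j : Fin k, cnt J (j : ℕ) = ∑ j' ∈ J, (k - 1 - (j' : ℕ)) := by
    calc ∑ j : Fin k, cnt J (j : ℕ)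
        = ∑ j : Fin k, ∑ j' ∈ J, (if j' < j then 1 else 0) := by
          refine Finset.sum_congr rfl fun j _ => ?_
          rw [hcnt_eq j, Finset.card_filter]
      _ = ∑ j' ∈ J, ∑ j : Fin k, (if j' < j then 1 else 0) := Finset.sum_comm
      _ = ∑ j' ∈ J, (k - 1 - (j' : ℕ)) := by
          refine Finset.sum_congr rfl fun j' _ => ?_
          rw [← Finset.card_filter]
          have : (Finset.univ.filter fun j => j' < j) = Finset.Ioi j' := by
            ext j; simp
          rw [this, Fin.card_Ioi]
  -- trichotomy : T.card = Tp.card + Tm.card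
  have hsplit : Tp.card + Tm.card = T.card := by
    have h1 : T.filter (fun p => π p.2 < π p.1) = Tp := by
      rw [hT, hTp, Finset.filter_filter]
    have h2 : T.filter (fun p => ¬ π p.2 < π p.1) = Tm := by
      rw [hT, hTm, Finset.filter_filter]
      apply Finset.filter_congr
      intro p hp
      have hpJ := Finset.mem_product.1 hp
      constructor
      · rintro ⟨h21, hnlt⟩
        refine ⟨h21, lt_of_le_of_ne (not_lt.1 hnlt) ?_⟩
        intro hEq
        exact absurd (hinj hpJ.1 hpJ.2 hEq) (ne_of_gt h21)
      · rintro ⟨h21, hlt⟩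
        exact ⟨h21, not_lt.2 (le_of_lt hlt)⟩
    calc Tp.card + Tm.card
        = (T.filter (fun p => π p.2 < π p.1)).card
          + (T.filter (fun p => ¬ π p.2 < π p.1)).card := by rw [h1, h2]
      _ = T.card := Finset.card_filter_add_card_filter_not _
  -- Tm.card = Inv.card  via swap
  have hTmInv : Tm.card = Inv.card := by
    apply Finset.card_nbij Prod.swap
    · intro p hp
      rw [hTm, Finset.mem_coe, Finset.mem_filter, Finset.mem_product] at hp
      rw [hInv, Finset.mem_coe, Finset.mem_filter, Finset.mem_product]
      exact ⟨⟨hp.1.2, hp.1.1⟩, hp.2.1, hp.2.2⟩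
    · exact Function.Injective.injOn Prod.swap_injective
    · intro p hp
      rw [hInv, Finset.mem_coe, Finset.mem_filter, Finset.mem_product] at hp
      refine ⟨p.swap, ?_, Prod.swap_swap p⟩
      simp only [Finset.mem_coe, hTm, Finset.mem_filter, Finset.mem_product]
      exact ⟨⟨hp.1.2, hp.1.1⟩, hp.2.1, hp.2.2⟩
  -- sum over J of values of π equals sum over I
  have hπsum : ∑ j ∈ J, ((π j : ℕ) : ℤ) = ∑ i ∈ I, ((i : ℕ) : ℤ) := by
    rw [← himg, Finset.sum_image]
    intro a ha b hb hab
    exact hinj ha hb hab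
  -- cast the right-hand side
  have hcVal : ∑ j ∈ J, (cVal J π j : ℤ)
      = ∑ j ∈ J, ((π j : ℕ) : ℤ) - ∑ j ∈ J, (cA J π j : ℤ) := by
    rw [← Finset.sum_sub_distrib]
    refine Finset.sum_congr rfl fun j _ => ?_
    rw [cVal, Nat.cast_sub (hA_le j)]
  have hmVal : ∑ j ∈ Jᶜ, (mVal J j : ℤ)
      = ∑ j ∈ Jᶜ, ((k : ℤ) - (cnt J (j : ℕ) : ℤ)) := by
    refine Finset.sum_congr rfl fun j _ => ?_
    rw [mVal, Nat.cast_sub (hcnt_le _)]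
  have hcompl_card : (Jᶜ : Finset (Fin k)).card = k - r := by
    rw [Finset.card_compl, hJ, Fintype.card_fin]
  have hcnt_sumC : ∑ j ∈ Jᶜ, (cnt J (j : ℕ) : ℤ)
      = ∑ j : Fin k, (cnt J (j : ℕ) : ℤ) - ∑ j ∈ J, (cnt J (j : ℕ) : ℤ) := by
    rw [← Finset.sum_add_sum_compl J fun j : Fin k => (cnt J (j : ℕ) : ℤ)]
    ring
  have hsumU : ∑ j : Fin k, (cnt J (j : ℕ) : ℤ) = ∑ j' ∈ J, ((k : ℤ) - 1 - (j' : ℕ)) := by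
    have := congrArg (fun n : ℕ => (n : ℤ)) hcnt_sumU
    push_cast at this
    rw [this]
    refine Finset.sum_congr rfl fun j' _ => ?_
    have hj' : (j' : ℕ) ≤ k - 1 := by omega
    omega
  have hsumJ : ∑ j ∈ J, (cnt J (j : ℕ) : ℤ) = (T.card : ℤ) := by exact_mod_cast hcnt_sumJ
  have hsumA : ∑ j ∈ J, (cA J π j : ℤ) = (Tp.card : ℤ) := by exact_mod_cast hcA_sum
  have hTcard : (T.card : ℤ) = (Tp.card : ℤ) + (Inv.card : ℤ) := by
    rw [← hTmInv]; exact_mod_cast hsplit.symm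
  have hR1 : ∑ j ∈ J, (cVal J π j : ℤ)
      = ∑ i ∈ I, ((i : ℕ) : ℤ) - (Tp.card : ℤ) := by
    rw [hcVal, hπsum, hsumA]
  have hsum_constC : ∑ _j ∈ Jᶜ, (k : ℤ) = ((k : ℤ) - r) * k := by
    rw [Finset.sum_const, hcompl_card, nsmul_eq_mul, Nat.cast_sub hrk]
  have hR2 : ∑ j ∈ Jᶜ, (mVal J j : ℤ)
      = ((k : ℤ) - r) * k - ((∑ j' ∈ J, ((k : ℤ) - 1 - (j' : ℕ))) - (T.card : ℤ)) := by
    rw [hmVal, Finset.sum_sub_distrib, hsum_constC, hcnt_sumC, hsumU, hsumJ]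
  have hSJ : ∑ j' ∈ J, ((k : ℤ) - 1 - (j' : ℕ))
      = ((k : ℤ) - 1) * r - ∑ j ∈ J, ((j : ℕ) : ℤ) := by
    rw [Finset.sum_sub_distrib, Finset.sum_const, hJ, nsmul_eq_mul]
    ring
  have hIcard : ∑ i ∈ I, ((i : ℤ) + 1) = (∑ i ∈ I, ((i : ℕ) : ℤ)) + r := by
    rw [Finset.sum_add_distrib, Finset.sum_const, hI]
    push_cast
    ring
  have hJcard : ∑ j ∈ J, ((j : ℤ) + 1) = (∑ j ∈ J, ((j : ℕ) : ℤ)) + r := by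
    rw [Finset.sum_add_distrib, Finset.sum_const, hJ]
    push_cast
    ring
  -- final computation
  push_cast
  rw [hR1, hR2, hSJ, hIcard, hJcard, hTcard]
  ring


lemma tail_prob {q : ℝ} (hq0 : 0 < q) (hq1 : q < 1)
    {Ω : Type*} [MeasurableSpace Ω] (P : Measure Ω) [IsProbabilityMeasure P]
    (f : Ω → ℕ) (hf : Measurable f)
    (hg : ∀ i : ℕ, P {ω | f ω = i} = ENNReal.ofReal ((1 - q) * q ^ i)) :
    ∀ m : ℕ, P {ω | m ≤ f ω} = ENNReal.ofReal (q ^ m) := by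
  intro m
  induction m with
  | zero => simp
  | succ m ih =>
    have hsplit : {ω | m ≤ f ω} = {ω | f ω = m} ∪ {ω | m + 1 ≤ f ω} := by
      ext ω; simp only [Set.mem_setOf_eq, Set.mem_union]; omega
    have hdisj : Disjoint {ω | f ω = m} {ω | m + 1 ≤ f ω} := by
      rw [Set.disjoint_left]
      intro ω h1 h2
      simp only [Set.mem_setOf_eq] at h1 h2
      omega
    have hmeas2 : MeasurableSet {ω | m + 1 ≤ f ω} := by
      have : {ω | m + 1 ≤ f ω} = f ⁻¹' (Set.Ici (m + 1)) := rfl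
      rw [this]; exact hf measurableSet_Ici
    have hunion := measure_union (μ := P) hdisj hmeas2
    rw [← hsplit, ih, hg] at hunion
    have hq0m : (0 : ℝ) ≤ q ^ (m + 1) := by positivity
    have h1q : (0 : ℝ) ≤ (1 - q) * q ^ m := by nlinarith [pow_pos hq0 m]
    have hqm : (q : ℝ) ^ m = (1 - q) * q ^ m + q ^ (m + 1) := by ring
    nth_rewrite 1 [hqm] at hunion
    rw [ENNReal.ofReal_add h1q hq0m] at hunion
    have hfin : ENNReal.ofReal ((1 - q) * q ^ m) ≠ ⊤ := ENNReal.ofReal_ne_top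
    exact ((ENNReal.add_right_inj hfin).1 hunion).symm

end Stmt17Aux


/-- finite-dimensional distributions of the Mallows measure on bijections of
`ℕ`.  With positions and values written `0`-based (so `j : Fin k` stands for `j+1`, and
"`σ(j) ≤ k`" becomes "`σ(j) < k`"), for `I, J ⊆ {0, …, k-1}` with `|I| = |J| = r` and a
bijection `π` from `J` onto `I`, the probability that `σ(j) < k` iff `j ∈ J` and
`σ(j) = π(j)` for `j ∈ J` equals
`(1-q)^r q^{k² - 2kr - r + inv(π) + Σ_{i∈I}(i+1) + Σ_{j∈J}(j+1)}` (the sums use `1`-based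
values).  Here `ξ_0, ξ_1, …` are independent, geometric: `P(ξ = i) = (1-q) q^i`. -/
theorem stmt_17 (q : ℝ) (hq0 : 0 < q) (hq1 : q < 1)
    (Ω : Type*) [MeasurableSpace Ω] (P : Measure Ω) [IsProbabilityMeasure P]
    (ξ : ℕ → Ω → ℕ) (hmeas : ∀ j, Measurable (ξ j))
    (hindep : iIndepFun ξ P)
    (hgeom : ∀ j i : ℕ, P {ω | ξ j ω = i} = ENNReal.ofReal ((1 - q) * q ^ i))
    (k : ℕ) (hk : 1 ≤ k) (r : ℕ) (I J : Finset (Fin k)) (hI : I.card = r) (hJ : J.card = r)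
    (π : Fin k → Fin k) (hmaps : ∀ j ∈ J, π j ∈ I) (hinj : Set.InjOn π ↑J)
    (himg : J.image π = I) :
    P {ω | ∀ j : Fin k,
        (shuffleSeq (fun t => ξ t ω) (j : ℕ) < k ↔ j ∈ J) ∧
        (j ∈ J → shuffleSeq (fun t => ξ t ω) (j : ℕ) = (π j : ℕ))} =
      ENNReal.ofReal ((1 - q) ^ r *
        q ^ ((k : ℤ) ^ 2 - 2 * (k : ℤ) * (r : ℤ) - (r : ℤ) +
          (((J ×ˢ J).filter (fun p : Fin k × Fin k => p.1 < p.2 ∧ π p.2 < π p.1)).card : ℤ) +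
          (∑ i ∈ I, ((i : ℤ) + 1)) + (∑ j ∈ J, ((j : ℤ) + 1)))) := by
  classical
  have hq' : (0 : ℝ) ≤ 1 - q := by linarith
  set B : Fin k → Set ℕ := fun j =>
    if j ∈ J then {Stmt17Aux.cVal J π j} else Set.Ici (Stmt17Aux.mVal J j) with hB
  have hmemB : ∀ (j : Fin k) (c : ℕ),
      c ∈ B j ↔ ((j ∈ J → c = Stmt17Aux.cVal J π j) ∧ (j ∉ J → Stmt17Aux.mVal J j ≤ c)) := by
    intro j c
    by_cases hj : j ∈ J <;> simp [hB, hj]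
  -- rewrite the event as an intersection of coordinate events
  have hset : {ω | ∀ j : Fin k,
        (shuffleSeq (fun t => ξ t ω) (j : ℕ) < k ↔ j ∈ J) ∧
        (j ∈ J → shuffleSeq (fun t => ξ t ω) (j : ℕ) = (π j : ℕ))}
      = ⋂ t ∈ Finset.range k, (if h : t < k then ξ t ⁻¹' B ⟨t, h⟩ else Set.univ) := by
    ext ω
    simp only [Set.mem_setOf_eq, Set.mem_iInter]
    rw [Stmt17Aux.key hinj (fun t => ξ t ω)]
    constructor
    · intro hC t ht
      rw [Finset.mem_range] at ht
      rw [dif_pos ht, Set.mem_preimage, hmemB]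
      exact (hC ⟨t, ht⟩)
    · intro hC j
      have h := hC (j : ℕ) (Finset.mem_range.2 j.isLt)
      rw [dif_pos j.isLt, Set.mem_preimage, hmemB] at h
      simpa using h
  rw [hset]
  rw [hindep.meas_biInter (fun t ht => by
    rw [Finset.mem_range] at ht
    rw [dif_pos ht]
    exact ⟨B ⟨t, ht⟩, MeasurableSet.of_discrete, rfl⟩)]
  rw [← Fin.prod_univ_eq_prod_range
    (fun t => P (if h : t < k then ξ t ⁻¹' B ⟨t, h⟩ else Set.univ)) k]
  -- identify each factor
  set g : Fin k → ℝ := fun j =>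
    if j ∈ J then (1 - q) * q ^ (Stmt17Aux.cVal J π j) else q ^ (Stmt17Aux.mVal J j) with hg
  have hfactor : ∀ j : Fin k,
      P (if h : (j : ℕ) < k then ξ (j : ℕ) ⁻¹' B ⟨(j : ℕ), h⟩ else Set.univ)
        = ENNReal.ofReal (g j) := by
    intro j
    rw [dif_pos j.isLt]
    have hEta : (⟨(j : ℕ), j.isLt⟩ : Fin k) = j := rfl
    rw [hEta]
    by_cases hj : j ∈ J
    · have hBj : B j = {Stmt17Aux.cVal J π j} := by rw [hB]; simp [hj]
      have hpre : ξ (j : ℕ) ⁻¹' B j = {ω | ξ (j : ℕ) ω = Stmt17Aux.cVal J π j} := by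
        rw [hBj]; rfl
      rw [hpre, hgeom, hg]
      simp [hj]
    · have hBj : B j = Set.Ici (Stmt17Aux.mVal J j) := by rw [hB]; simp [hj]
      have hpre : ξ (j : ℕ) ⁻¹' B j = {ω | Stmt17Aux.mVal J j ≤ ξ (j : ℕ) ω} := by
        rw [hBj]; rfl
      rw [hpre, Stmt17Aux.tail_prob hq0 hq1 P (ξ (j : ℕ)) (hmeas _) (hgeom (j : ℕ)), hg]
      simp [hj]
  rw [Finset.prod_congr rfl (fun j _ => hfactor j)]
  have hgnn : ∀ j ∈ Finset.univ, (0 : ℝ) ≤ g j := by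
    intro j _
    rw [hg]
    by_cases hj : j ∈ J <;> simp [hj] <;> positivity
  rw [← ENNReal.ofReal_prod_of_nonneg hgnn]
  congr 1
  -- now a purely real computation
  rw [← Finset.prod_mul_prod_compl J g]
  have h1 : ∏ j ∈ J, g j = (1 - q) ^ r * q ^ (∑ j ∈ J, Stmt17Aux.cVal J π j) := by
    calc ∏ j ∈ J, g j = ∏ j ∈ J, (1 - q) * q ^ (Stmt17Aux.cVal J π j) :=
          Finset.prod_congr rfl fun j hj => by rw [hg]; simp [hj]
      _ = (∏ _j ∈ J, (1 - q)) * ∏ j ∈ J, q ^ (Stmt17Aux.cVal J π j) :=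
          Finset.prod_mul_distrib
      _ = (1 - q) ^ r * q ^ (∑ j ∈ J, Stmt17Aux.cVal J π j) := by
          rw [Finset.prod_const, hJ, Finset.prod_pow_eq_pow_sum]
  have h2 : ∏ j ∈ Jᶜ, g j = q ^ (∑ j ∈ Jᶜ, Stmt17Aux.mVal J j) := by
    calc ∏ j ∈ Jᶜ, g j = ∏ j ∈ Jᶜ, q ^ (Stmt17Aux.mVal J j) :=
          Finset.prod_congr rfl fun j hj => by
            rw [hg]; simp [Finset.mem_compl.1 hj]
      _ = q ^ (∑ j ∈ Jᶜ, Stmt17Aux.mVal J j) := Finset.prod_pow_eq_pow_sum _ _ _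
  rw [h1, h2]
  have hexp := Stmt17Aux.exponent_eq π I J hI hJ hinj himg
  rw [hexp, zpow_natCast, pow_add]
  ring
end

section
/- For n ≥ 2, define the deletion map D : S_n → S_{n−1} that removes the letter n from the one-line word σ(1)⋯σ(n): if p = σ^{−1}(n), then D(σ)(j) = σ(j) for j < p and D(σ)(j) = σ(j + 1) for p ≤ j ≤ n − 1. Then for every q > 0 the pushforward of the Mallows measure Q_n under D equals the Mallows measure Q_{n−1}. -/
open Finset

/-- The number of inversions of a permutation. -/
def invPerm {n : ℕ} (σ : Equiv.Perm (Fin n)) : ℕ :=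
  (Finset.univ.filter (fun p : Fin n × Fin n => p.1 < p.2 ∧ σ p.2 < σ p.1)).card

/-- The `q`-integer `[m]_q = 1 + q + ⋯ + q^{m-1}`. -/
def qInt (q : ℝ) (m : ℕ) : ℝ := ∑ i ∈ Finset.range m, q ^ i

/-- The `q`-factorial `[n]_q! = [1]_q [2]_q ⋯ [n]_q`. -/
def qFact (q : ℝ) (n : ℕ) : ℝ := ∏ j ∈ Finset.range n, qInt q (j + 1)

/-- The deletion map `D : S_{m+2} → S_{m+1}` removing the largest letter from the one-line
word: if `p` is the position of the largest letter, the resulting word (given here by its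
values, as natural numbers) is `D(σ)(j) = σ(j)` for `j < p` and `D(σ)(j) = σ(j+1)` for
`j ≥ p` (everything `0`-based). -/
def delFun {m : ℕ} (σ : Equiv.Perm (Fin (m + 2))) (j : Fin (m + 1)) : ℕ :=
  if (j : ℕ) < ((σ.symm (Fin.last (m + 1))) : ℕ) then (σ (Fin.castSucc j) : ℕ)
  else (σ j.succ : ℕ)

/-- The insertion map: insert the largest letter at position `p` in the one-line word of `τ`. -/
def ins {m : ℕ} (τ : Equiv.Perm (Fin (m + 1))) (p : Fin (m + 2)) : Equiv.Perm (Fin (m + 2)) :=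
  (finSuccEquiv' p).trans ((Equiv.optionCongr τ).trans (finSuccEquiv' (Fin.last (m + 1))).symm)

lemma ins_self {m : ℕ} (τ : Equiv.Perm (Fin (m + 1))) (p : Fin (m + 2)) :
    ins τ p p = Fin.last (m + 1) := by
  simp [ins, finSuccEquiv'_at, finSuccEquiv'_symm_none]

lemma ins_succAbove {m : ℕ} (τ : Equiv.Perm (Fin (m + 1))) (p : Fin (m + 2)) (j : Fin (m + 1)) :
    ins τ p (p.succAbove j) = Fin.castSucc (τ j) := by
  simp [ins, finSuccEquiv'_succAbove, ← Fin.succAbove_last]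

lemma ins_symm_last {m : ℕ} (τ : Equiv.Perm (Fin (m + 1))) (p : Fin (m + 2)) :
    (ins τ p).symm (Fin.last (m + 1)) = p := by
  rw [Equiv.symm_apply_eq, ins_self]

lemma succAbove_eq_ite {m : ℕ} (p : Fin (m + 2)) (j : Fin (m + 1)) :
    p.succAbove j = if (j : ℕ) < (p : ℕ) then Fin.castSucc j else j.succ := by
  split
  · exact Fin.succAbove_of_castSucc_lt p j (by simpa [Fin.lt_def] using ‹_›)
  · exact Fin.succAbove_of_le_castSucc p j (by simpa [Fin.le_def] using Nat.le_of_not_lt ‹_›)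

lemma delFun_ins {m : ℕ} (τ : Equiv.Perm (Fin (m + 1))) (p : Fin (m + 2)) (j : Fin (m + 1)) :
    delFun (ins τ p) j = (τ j : ℕ) := by
  rw [delFun, ins_symm_last]
  split
  · rw [show Fin.castSucc j = p.succAbove j by rw [succAbove_eq_ite]; simp [‹_›]]
    rw [ins_succAbove]; simp
  · rw [show j.succ = p.succAbove j by rw [succAbove_eq_ite]; simp [‹_›]]
    rw [ins_succAbove]; simp

lemma eq_ins_of_delFun {m : ℕ} (τ : Equiv.Perm (Fin (m + 1))) (σ : Equiv.Perm (Fin (m + 2)))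
    (h : ∀ j : Fin (m + 1), delFun σ j = (τ j : ℕ)) :
    σ = ins τ (σ.symm (Fin.last (m + 1))) := by
  set p := σ.symm (Fin.last (m + 1)) with hp
  have key : ∀ j : Fin (m + 1), σ (p.succAbove j) = Fin.castSucc (τ j) := by
    intro j
    have hj := h j
    rw [delFun] at hj
    apply Fin.ext
    rw [succAbove_eq_ite]
    split
    · rw [if_pos ‹_›] at hj; simpa using hj
    · rw [if_neg ‹_›] at hj; simpa using hj
  ext x
  rcases eq_or_ne x p with rfl | hx
  · rw [ins_self]; simp [hp]
  · obtain ⟨j, rfl⟩ := Fin.exists_succAbove_eq hx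
    rw [key, ins_succAbove]

lemma invPerm_ins {m : ℕ} (τ : Equiv.Perm (Fin (m + 1))) (p : Fin (m + 2)) :
    invPerm (ins τ p) = invPerm τ + (m + 1 - (p : ℕ)) := by
  set σ := ins τ p with hσ
  rw [invPerm]
  set A := Finset.univ.filter
    (fun x : Fin (m + 2) × Fin (m + 2) => x.1 < x.2 ∧ σ x.2 < σ x.1) with hA
  rw [← Finset.card_filter_add_card_filter_not
    (p := fun x : Fin (m + 2) × Fin (m + 2) => x.1 ≠ p ∧ x.2 ≠ p) (s := A)]
  congr 1
  · -- inversions not involving p ↔ inversions of τ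
    symm
    apply Finset.card_bij (fun b _ => (p.succAbove b.1, p.succAbove b.2))
    · intro b hb
      simp only [invPerm, Finset.mem_filter, Finset.mem_univ, true_and] at hb
      simp only [hA, Finset.mem_filter, Finset.mem_univ, true_and]
      refine ⟨⟨Fin.succAbove_lt_succAbove_iff.2 hb.1, ?_⟩,
        Fin.succAbove_ne p b.1, Fin.succAbove_ne p b.2⟩
      rw [hσ, ins_succAbove, ins_succAbove]
      exact Fin.castSucc_lt_castSucc_iff.2 hb.2
    · intro a _ b _ hab
      have h1 := congrArg Prod.fst hab
      have h2 := congrArg Prod.snd hab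
      simp only at h1 h2
      exact Prod.ext (Fin.succAbove_right_injective h1) (Fin.succAbove_right_injective h2)
    · intro x hx
      simp only [hA, Finset.mem_filter, Finset.mem_univ, true_and] at hx
      obtain ⟨⟨hlt, hinv⟩, h1, h2⟩ := hx
      obtain ⟨a, ha⟩ := Fin.exists_succAbove_eq h1
      obtain ⟨b, hb⟩ := Fin.exists_succAbove_eq h2
      refine ⟨(a, b), ?_, by rw [ha, hb]⟩
      simp only [invPerm, Finset.mem_filter, Finset.mem_univ, true_and]
      rw [← ha, ← hb] at hlt hinv
      rw [hσ, ins_succAbove, ins_succAbove] at hinv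
      exact ⟨Fin.succAbove_lt_succAbove_iff.1 hlt, Fin.castSucc_lt_castSucc_iff.1 hinv⟩
  · -- inversions involving p : exactly the pairs (p, j) with p < j
    have : A.filter (fun x => ¬(x.1 ≠ p ∧ x.2 ≠ p)) =
        (Finset.Ioi p).map ⟨fun j => (p, j), fun a b h => by simpa using h⟩ := by
      ext x
      simp only [Finset.mem_filter, hA, Finset.mem_univ, true_and, Finset.mem_map,
        Finset.mem_Ioi, Function.Embedding.coeFn_mk, not_and_or, not_ne_iff]
      constructor
      · rintro ⟨⟨hlt, hinv⟩, hc⟩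
        have h2 : x.2 ≠ p := by
          rintro rfl
          rw [hσ, ins_self] at hinv
          exact absurd hinv (not_lt.2 (Fin.le_last _))
        have h1 : x.1 = p := hc.resolve_right h2
        exact ⟨x.2, h1 ▸ hlt, Prod.ext h1.symm rfl⟩
      · rintro ⟨j, hj, rfl⟩
        have h2 : j ≠ p := (ne_of_gt hj)
        obtain ⟨b, rfl⟩ := Fin.exists_succAbove_eq h2
        refine ⟨⟨hj, ?_⟩, Or.inl rfl⟩
        show (ins τ p) (p.succAbove b) < (ins τ p) p
        rw [ins_self, ins_succAbove]
        exact Fin.castSucc_lt_last _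
    rw [this, Finset.card_map, Fin.card_Ioi]
    omega

lemma qInt_pos' {q : ℝ} (hq : 0 < q) (k : ℕ) (hk : 0 < k) :
    0 < (∑ i ∈ Finset.range k, q ^ i) :=
  Finset.sum_pos (fun i _ => pow_pos hq i) (Finset.nonempty_range_iff.2 (by omega))

theorem stmt_18_aux (q : ℝ) (hq : 0 < q) (m : ℕ) (τ : Equiv.Perm (Fin (m + 1))) :
    ∑ σ ∈ Finset.univ.filter
        (fun σ : Equiv.Perm (Fin (m + 2)) => ∀ j : Fin (m + 1), delFun σ j = (τ j : ℕ)),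
      q ^ invPerm σ / (∏ j ∈ Finset.range (m+2), ∑ i ∈ Finset.range (j+1), q ^ i) =
    q ^ invPerm τ / (∏ j ∈ Finset.range (m+1), ∑ i ∈ Finset.range (j+1), q ^ i) := by
  have hfiber : Finset.univ.filter
      (fun σ : Equiv.Perm (Fin (m + 2)) => ∀ j : Fin (m + 1), delFun σ j = (τ j : ℕ)) =
      Finset.image (ins τ) Finset.univ := by
    ext σ
    simp only [Finset.mem_filter, Finset.mem_univ, true_and, Finset.mem_image]
    constructor
    · intro h; exact ⟨_, (eq_ins_of_delFun τ σ h).symm⟩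
    · rintro ⟨p, -, rfl⟩; exact delFun_ins τ p
  rw [hfiber, Finset.sum_image (fun p _ p' _ h => by
    rw [← ins_symm_last τ p, h, ins_symm_last])]
  have h2 : 0 < (∑ i ∈ Finset.range (m + 2), q ^ i) := qInt_pos' hq _ (by omega)
  have h1 : 0 < (∏ j ∈ Finset.range (m+1), ∑ i ∈ Finset.range (j+1), q ^ i) :=
    Finset.prod_pos (fun j _ => qInt_pos' hq _ (by omega))
  simp only [invPerm_ins, pow_add]
  rw [← Finset.sum_div, ← Finset.mul_sum]
  have hsum : ∑ p : Fin (m + 2), q ^ (m + 1 - (p : ℕ)) = ∑ i ∈ Finset.range (m + 2), q ^ i := by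
    rw [Fin.sum_univ_eq_sum_range (fun i => q ^ (m + 1 - i)) (m + 2)]
    exact Finset.sum_range_reflect (fun i => q ^ i) (m + 2)
  rw [hsum, Finset.prod_range_succ]
  rw [mul_div_mul_right _ _ (ne_of_gt h2)]

/-- the pushforward of the Mallows measure `Q_n` (`n = m + 2 ≥ 2`) under the
deletion map `D` is the Mallows measure `Q_{n-1}`:  for every `τ ∈ S_{n-1}`,
`∑_{σ : D(σ) = τ} q^{inv σ}/[n]_q! = q^{inv τ}/[n-1]_q!`. -/
theorem stmt_18 (q : ℝ) (hq : 0 < q) (m : ℕ) (τ : Equiv.Perm (Fin (m + 1))) :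
    ∑ σ ∈ Finset.univ.filter
        (fun σ : Equiv.Perm (Fin (m + 2)) => ∀ j : Fin (m + 1), delFun σ j = (τ j : ℕ)),
      q ^ invPerm σ / qFact q (m + 2) =
    q ^ invPerm τ / qFact q (m + 1) := by
  simp only [qFact, qInt]
  exact stmt_18_aux q hq m τ
end
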